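/- arXiv:1302.2315 — 3 statements merged into one kernel-verified Lean document; each statement's English description precedes it below -/
import Mathlib

section
/- If f ∈ PW_π (the Paley–Wiener space of L² functions band-limited to [−π,π]) then f(t) = Σ_{n∈ℤ} f(n)·sinc(t−n), with convergence in L²(ℝ) and uniformly on ℝ. -/
noncomputable section
open MeasureTheory Complex Filter Topology

/-- a(θ) = cot(θ)/2 -/
def aP (θ : ℝ) : ℝ := (Real.cos θ / Real.sin θ) / 2
/-- b(θ) = csc θ -/
def bP (θ : ℝ) : ℝ := 1 / Real.sin θ
/-- Δ = 2π/|b| -/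
def ΔP (θ : ℝ) : ℝ := 2 * Real.pi / |bP θ|
/-- c(θ) = √((1 − i cot θ)/(2π)) -/
def cP (θ : ℝ) : ℂ := ((1 - Complex.I * (Real.cos θ / Real.sin θ)) / (2 * Real.pi)) ^ ((1 : ℂ)/2)
/-- chirp λ_θ(t) = e^{ia t²} -/
def lamP (θ : ℝ) (t : ℝ) : ℂ := Complex.exp (Complex.I * (aP θ) * t ^ 2)
/-- FrFT kernel K_θ(t,ξ) -/
def KP (θ : ℝ) (t ξ : ℝ) : ℂ :=
  cP θ * Complex.exp (Complex.I * (aP θ) * (t ^ 2 + ξ ^ 2) - Complex.I * (bP θ) * t * ξ)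
/-- fractional Fourier transform -/
def frft (θ : ℝ) (f : ℝ → ℂ) (ξ : ℝ) : ℂ := ∫ t : ℝ, f t * KP θ t ξ
/-- ordinary Fourier transform, 𝓕[f](ξ) = (1/√(2π)) ∫ f(t) e^{-itξ} dt -/
def ft (f : ℝ → ℂ) (ξ : ℝ) : ℂ :=
  (1 / Real.sqrt (2 * Real.pi) : ℝ) * ∫ t : ℝ, f t * Complex.exp (-Complex.I * t * ξ)
/-- normalized sinc -/
def nsinc (t : ℝ) : ℝ := if t = 0 then 1 else Real.sin (Real.pi * t) / (Real.pi * t)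
/-- fractional Zak transform -/
def zakP (θ : ℝ) (φ : ℝ → ℂ) (t ξ : ℝ) : ℂ :=
  ∑' n : ℤ, lamP θ (t - n) * φ (t - n) * lamP θ n * (starRingEnd ℂ) (KP θ n ξ)

open Set AddCircle
open scoped ENNReal NNReal

namespace WSKaux

abbrev S : Set ℝ := Set.Ioc (-Real.pi) Real.pi

instance fact2pi : Fact (0 < 2 * Real.pi) := ⟨by positivity⟩

lemma neg_pi_add : -Real.pi + 2 * Real.pi = Real.pi := by ring

def rho : AddCircle (2 * Real.pi) → ℝ :=
  fun x => (AddCircle.equivIoc (2 * Real.pi) (-Real.pi) x : ℝ)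

lemma rho_mk {ξ : ℝ} (hξ : ξ ∈ S) : rho ((ξ : ℝ) : AddCircle (2 * Real.pi)) = ξ := by
  have hξ' : ξ ∈ Set.Ioc (-Real.pi) (-Real.pi + 2 * Real.pi) := by rw [neg_pi_add]; exact hξ
  have h : (AddCircle.equivIoc (2 * Real.pi) (-Real.pi)) ((ξ : ℝ) : AddCircle (2 * Real.pi))
      = ⟨ξ, hξ'⟩ := by
    rw [Equiv.apply_eq_iff_eq_symm_apply]; rfl
  rw [rho, h]

lemma measurable_rho : Measurable rho :=
  measurable_subtype_coe.comp (AddCircle.measurableEquivIoc (2 * Real.pi) (-Real.pi)).measurable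

lemma measurePreserving_rho :
    MeasurePreserving rho (volume : Measure (AddCircle (2 * Real.pi))) (volume.restrict S) := by
  have hmk := AddCircle.measurePreserving_mk (2 * Real.pi) (-Real.pi)
  rw [neg_pi_add] at hmk
  refine ⟨measurable_rho, ?_⟩
  rw [← hmk.map_eq, Measure.map_map measurable_rho AddCircle.measurable_mk']
  have hae : (rho ∘ (fun x : ℝ => (x : AddCircle (2 * Real.pi))))
      =ᵐ[volume.restrict S] id := by
    filter_upwards [ae_restrict_mem measurableSet_Ioc] with ξ hξ
    exact rho_mk hξ
  rw [Measure.map_congr hae, Measure.map_id]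

lemma two_pi_enn_ne_zero : ENNReal.ofReal (2 * Real.pi) ≠ 0 :=
  (ENNReal.ofReal_pos.mpr Real.two_pi_pos).ne'

lemma memLp_circle {H : ℝ → ℂ} (hH : MemLp H 2 (volume.restrict S)) :
    MemLp (H ∘ rho) 2 (haarAddCircle : Measure (AddCircle (2 * Real.pi))) := by
  have h1 : MemLp (H ∘ rho) 2 (volume : Measure (AddCircle (2 * Real.pi))) :=
    hH.comp_measurePreserving measurePreserving_rho
  have h2 := h1.smul_measure (c := (ENNReal.ofReal (2 * Real.pi))⁻¹)
    (ENNReal.inv_ne_top.mpr two_pi_enn_ne_zero)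
  rwa [AddCircle.volume_eq_smul_haarAddCircle, smul_smul,
    ENNReal.inv_mul_cancel two_pi_enn_ne_zero ENNReal.ofReal_ne_top, one_smul] at h2

lemma coeff_formula (H : ℝ → ℂ) (m : ℤ) :
    fourierCoeff (H ∘ rho) m
      = ((2 * Real.pi)⁻¹ : ℝ) • ∫ ξ in S, Complex.exp (-(Complex.I * m * ξ)) * H ξ := by
  rw [fourierCoeff_eq_intervalIntegral _ m (-Real.pi)]
  have hle : -Real.pi ≤ -Real.pi + 2 * Real.pi := by rw [neg_pi_add]; linarith [Real.pi_pos]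
  rw [intervalIntegral.integral_of_le hle, neg_pi_add]
  have : ∀ ξ ∈ S,
      (fourier (-m) ((ξ : ℝ) : AddCircle (2 * Real.pi))) • (H ∘ rho) ((ξ : ℝ) : AddCircle (2 * Real.pi))
        = Complex.exp (-(Complex.I * m * ξ)) * H ξ := by
    intro ξ hξ
    rw [Function.comp_apply, rho_mk hξ, fourier_coe_apply, smul_eq_mul]
    congr 2
    have h2π : ((2 * Real.pi : ℝ) : ℂ) ≠ 0 := by
      exact_mod_cast (by positivity : (2 * Real.pi : ℝ) ≠ 0)
    have h2π' : (2 * (Real.pi : ℂ)) ≠ 0 := by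
      push_cast at h2π ⊢
      exact h2π
    push_cast
    rw [div_eq_iff h2π']
    ring
  rw [setIntegral_congr_fun measurableSet_Ioc this]
  norm_num

lemma parseval_Ioc {H : ℝ → ℂ} (hH : MemLp H 2 (volume.restrict S)) :
    HasSum (fun m : ℤ => ‖∫ ξ in S, Complex.exp (-(Complex.I * m * ξ)) * H ξ‖ ^ 2)
      (2 * Real.pi * ∫ ξ in S, ‖H ξ‖ ^ 2) := by
  have hHc := memLp_circle hH
  set u : Lp ℂ 2 (haarAddCircle : Measure (AddCircle (2 * Real.pi))) := hHc.toLp (H ∘ rho) with hu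
  have hcoe : ⇑u =ᵐ[(haarAddCircle : Measure (AddCircle (2 * Real.pi)))] H ∘ rho :=
    hHc.coeFn_toLp
  have hcoeff : ∀ m : ℤ, fourierCoeff (⇑u) m = fourierCoeff (H ∘ rho) m := by
    intro m
    unfold fourierCoeff
    refine integral_congr_ae ?_
    filter_upwards [hcoe] with x hx
    rw [hx]
  have hsummable : Summable (fun m : ℤ => ‖fourierCoeff (⇑u) m‖ ^ 2) := by
    have h1 : Memℓp (⇑(fourierBasis.repr u)) 2 := lp.memℓp _
    have h2 := (memℓp_gen_iff (by norm_num : 0 < (2 : ℝ≥0∞).toReal)).1 h1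
    have h3 : ∀ m : ℤ, ‖(fourierBasis.repr u) m‖ ^ ((2 : ℝ≥0∞).toReal)
        = ‖fourierCoeff (⇑u) m‖ ^ 2 := by
      intro m
      rw [fourierBasis_repr]
      norm_num [Real.rpow_natCast]
    exact (summable_congr fun m => (h3 m)).1 h2
  have hpars := tsum_sq_fourierCoeff u
  -- value of ∫ ‖u‖² ∂haar
  have hmeas : AEStronglyMeasurable (fun ξ : ℝ => ‖H ξ‖ ^ 2) (volume.restrict S) := by
    exact hH.aestronglyMeasurable.norm.pow 2
  have hval : (∫ t : AddCircle (2 * Real.pi), ‖(⇑u) t‖ ^ 2 ∂haarAddCircle)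
      = (2 * Real.pi)⁻¹ * ∫ ξ in S, ‖H ξ‖ ^ 2 := by
    have e1 : (∫ t : AddCircle (2 * Real.pi), ‖(⇑u) t‖ ^ 2 ∂haarAddCircle)
        = ∫ t : AddCircle (2 * Real.pi), ‖H (rho t)‖ ^ 2 ∂haarAddCircle := by
      refine integral_congr_ae ?_
      filter_upwards [hcoe] with x hx
      rw [hx]
      rfl
    have e2 : ∫ ξ in S, ‖H ξ‖ ^ 2
        = ∫ t : AddCircle (2 * Real.pi), ‖H (rho t)‖ ^ 2 ∂(volume : Measure (AddCircle (2*Real.pi))) := by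
      rw [← measurePreserving_rho.map_eq, integral_map measurePreserving_rho.aemeasurable]
      rw [measurePreserving_rho.map_eq]; exact hmeas
    rw [e1, e2, AddCircle.volume_eq_smul_haarAddCircle, integral_smul_measure,
      ENNReal.toReal_ofReal (by positivity : (0:ℝ) ≤ 2 * Real.pi)]
    rw [smul_eq_mul, ← mul_assoc, inv_mul_cancel₀ (by positivity : (2*Real.pi) ≠ 0), one_mul]
  have hsum0 : HasSum (fun m : ℤ => ‖fourierCoeff (⇑u) m‖ ^ 2)
      ((2 * Real.pi)⁻¹ * ∫ ξ in S, ‖H ξ‖ ^ 2) := by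
    have := hsummable.hasSum
    rwa [hpars, hval] at this
  have hfinal := hsum0.mul_left ((2 * Real.pi) ^ 2)
  have hπ : (2 * Real.pi) ≠ 0 := by positivity
  have hfun : (fun m : ℤ => (2 * Real.pi) ^ 2 * ‖fourierCoeff (⇑u) m‖ ^ 2)
      = fun m : ℤ => ‖∫ ξ in S, Complex.exp (-(Complex.I * m * ξ)) * H ξ‖ ^ 2 := by
    funext m
    rw [hcoeff, coeff_formula, norm_smul, Real.norm_eq_abs,
      _root_.abs_of_nonneg (by positivity : (0:ℝ) ≤ (2*Real.pi)⁻¹), mul_pow]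
    field_simp
  have hv : (2 * Real.pi) ^ 2 * ((2 * Real.pi)⁻¹ * ∫ ξ in S, ‖H ξ‖ ^ 2)
      = 2 * Real.pi * ∫ ξ in S, ‖H ξ‖ ^ 2 := by
    field_simp
  rw [hfun, hv] at hfinal
  exact hfinal


lemma kernel_integral (x : ℝ) :
    ∫ ξ in S, Complex.exp (Complex.I * x * ξ) = ((2 * Real.pi * nsinc x : ℝ) : ℂ) := by
  have hle : (-Real.pi) ≤ Real.pi := by linarith [Real.pi_pos]
  rw [← intervalIntegral.integral_of_le hle]
  rcases eq_or_ne x 0 with h | h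
  · simp only [h, Complex.ofReal_zero, mul_zero, zero_mul, Complex.exp_zero, nsinc, if_pos rfl]
    rw [intervalIntegral.integral_const]
    simp [Complex.real_smul]
    push_cast
    ring
  · have hc : Complex.I * (x : ℂ) ≠ 0 :=
      mul_ne_zero Complex.I_ne_zero (by exact_mod_cast Complex.ofReal_ne_zero.mpr h)
    have := integral_exp_mul_complex (a := -Real.pi) (b := Real.pi) hc
    rw [show (fun ξ : ℝ => Complex.exp (Complex.I * x * ξ)) = fun ξ : ℝ => Complex.exp (Complex.I * x * ξ) from rfl]
    rw [this]
    have e1 : Complex.I * (x:ℂ) * (Real.pi : ℂ) = ((x * Real.pi : ℝ) : ℂ) * Complex.I := by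
      push_cast; ring
    have e2 : Complex.I * (x:ℂ) * ((-Real.pi : ℝ) : ℂ) = ((-(x * Real.pi) : ℝ) : ℂ) * Complex.I := by
      push_cast; ring
    rw [e1, e2, Complex.exp_mul_I, Complex.exp_mul_I]
    rw [nsinc, if_neg h]
    have hπ : (Real.pi : ℂ) ≠ 0 := by exact_mod_cast Real.pi_ne_zero
    have hx : (x : ℂ) ≠ 0 := Complex.ofReal_ne_zero.mpr h
    push_cast
    rw [Complex.cos_neg, Complex.sin_neg]
    field_simp
    rw [mul_comm (x:ℂ) (Real.pi:ℂ)]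
    ring

lemma nsinc_int (j : ℤ) : nsinc (j : ℝ) = if j = 0 then 1 else 0 := by
  rcases eq_or_ne j 0 with h | h
  · simp [h, nsinc]
  · rw [nsinc, if_neg (by exact_mod_cast h), if_neg h]
    rw [mul_comm, Real.sin_int_mul_pi]
    simp




def zEquiv : ℤ ≃ AddSubgroup.zmultiples (1 : ℝ) :=
  Equiv.ofBijective (fun m => ⟨(m : ℝ), ⟨m, by simp⟩⟩)
    ⟨fun a b hab => by
      have : ((a : ℝ)) = b := congrArg Subtype.val hab
      exact_mod_cast this,
     fun γ => by
      obtain ⟨k, hk⟩ := γ.2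
      exact ⟨k, Subtype.ext (by simpa using hk)⟩⟩

lemma lintegral_sq_eq (g : ℝ → ℂ) (hg : Continuous g) (ε : ℝ)
    (hsum : ∀ s : ℝ, HasSum (fun m : ℤ => ‖g (s + m)‖ ^ 2) ε) :
    ∫⁻ t, (‖g t‖₊ : ℝ≥0∞) ^ 2 = ENNReal.ofReal ε := by
  have hFD : IsAddFundamentalDomain (AddSubgroup.zmultiples (1 : ℝ)) (Set.Ioc (0:ℝ) 1) volume := by
    simpa using isAddFundamentalDomain_Ioc (zero_lt_one) 0 (volume)
  have h0 := hFD.lintegral_eq_tsum' (fun t => (‖g t‖₊ : ℝ≥0∞) ^ 2)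
  -- h0 : ∫⁻ x, f x = ∑' γ, ∫⁻ x in Ioc 0 1, f (-γ +ᵥ x)
  rw [h0]
  rw [← zEquiv.tsum_eq]
  have hterm : ∀ m : ℤ, (∫⁻ x in Set.Ioc (0:ℝ) 1, (‖g (-(zEquiv m) +ᵥ x)‖₊ : ℝ≥0∞) ^ 2)
      = ∫⁻ x in Set.Ioc (0:ℝ) 1, (‖g (x + (-m : ℤ))‖₊ : ℝ≥0∞) ^ 2 := by
    intro m
    apply lintegral_congr
    intro x
    have : (-(zEquiv m) +ᵥ x : ℝ) = x + ((-m : ℤ) : ℝ) := by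
      show -((m:ℝ)) + x = x + ((-m : ℤ) : ℝ)
      push_cast; ring
    rw [this]
  calc ∑' m : ℤ, ∫⁻ x in Set.Ioc (0:ℝ) 1, (‖g (-(zEquiv m) +ᵥ x)‖₊ : ℝ≥0∞) ^ 2
      = ∑' m : ℤ, ∫⁻ x in Set.Ioc (0:ℝ) 1, (‖g (x + (-m : ℤ))‖₊ : ℝ≥0∞) ^ 2 := by
        exact tsum_congr hterm
    _ = ∑' m : ℤ, ∫⁻ x in Set.Ioc (0:ℝ) 1, (‖g (x + m)‖₊ : ℝ≥0∞) ^ 2 := by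
        refine ((Equiv.neg ℤ).tsum_eq _).symm.trans (tsum_congr fun m => ?_)
        simp
    _ = ∫⁻ x in Set.Ioc (0:ℝ) 1, ∑' m : ℤ, (‖g (x + m)‖₊ : ℝ≥0∞) ^ 2 := by
        refine (lintegral_tsum fun m => ?_).symm
        exact ((hg.comp (continuous_id.add continuous_const)).measurable.nnnorm.coe_nnreal_ennreal.pow_const 2).aemeasurable
    _ = ∫⁻ _ in Set.Ioc (0:ℝ) 1, ENNReal.ofReal ε := by
        apply lintegral_congr
        intro x
        have hs := hsum x
        have : ∑' m : ℤ, (‖g (x + m)‖₊ : ℝ≥0∞) ^ 2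
            = ∑' m : ℤ, ENNReal.ofReal (‖g (x + m)‖ ^ 2) := by
          refine tsum_congr fun m => ?_
          rw [ENNReal.ofReal_pow (norm_nonneg _), ofReal_norm, enorm_eq_nnnorm]
        rw [this, ← ENNReal.ofReal_tsum_of_nonneg (fun m => sq_nonneg _) hs.summable, hs.tsum_eq]
    _ = ENNReal.ofReal ε := by
        rw [lintegral_const, Measure.restrict_apply_univ, Real.volume_Ioc]
        norm_num


lemma sum_neg_reindex (N : ℕ) (h : ℤ → ℂ) :
    ∑ m ∈ Finset.Icc (-(N:ℤ)) (N:ℤ), h (-m) = ∑ n ∈ Finset.Icc (-(N:ℤ)) (N:ℤ), h n := by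
  refine Finset.sum_nbij' (fun m => -m) (fun m => -m) ?_ ?_ ?_ ?_ ?_ <;>
    intros <;> simp_all [Finset.mem_Icc] <;> omega

end WSKaux
/-- Whittaker–Shannon–Kotelnikov sampling theorem on PW_π.
Membership in PW_π is expressed by: f is continuous, f ∈ L², and f is the
inverse Fourier transform of an L² function supported in [−π,π]. -/
theorem wsk_sampling
    (f : ℝ → ℂ) (hcont : Continuous f) (hf2 : MemLp f 2 volume)
    (F : ℝ → ℂ) (hF2 : MemLp F 2 volume)
    (hFsupp : ∀ ξ : ℝ, ξ ∉ Set.Icc (-Real.pi) Real.pi → F ξ = 0)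
    (hrep : ∀ t : ℝ, f t =
      (1 / Real.sqrt (2 * Real.pi) : ℝ) *
        ∫ ξ : ℝ, F ξ * Complex.exp (Complex.I * t * ξ)) :
    Tendsto (fun N : ℕ =>
        eLpNorm (fun t : ℝ =>
          f t - ∑ n ∈ Finset.Icc (-(N : ℤ)) (N : ℤ), f n * (nsinc (t - n) : ℝ))
          2 volume)
      atTop (nhds 0) ∧
    TendstoUniformly
      (fun N : ℕ => fun t : ℝ =>
        ∑ n ∈ Finset.Icc (-(N : ℤ)) (N : ℤ), f n * (nsinc (t - n) : ℝ))
      f atTop := by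
    classical
  set r : ℝ := Real.sqrt (2 * Real.pi) with hr
  have h2πpos : (0:ℝ) < 2 * Real.pi := by positivity
  have hrpos : 0 < r := Real.sqrt_pos.mpr h2πpos
  have hrsq : r ^ 2 = 2 * Real.pi := Real.sq_sqrt h2πpos.le
  have hrC : ((r:ℂ)) ≠ 0 := by exact_mod_cast Complex.ofReal_ne_zero.mpr hrpos.ne'
  haveI hfin : IsFiniteMeasure (volume.restrict WSKaux.S) :=
    ⟨by rw [Measure.restrict_apply_univ]; exact measure_Ioc_lt_top⟩
  have hFS2 : MemLp F 2 (volume.restrict WSKaux.S) := hF2.restrict _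
  have hFS1 : Integrable F (volume.restrict WSKaux.S) := hFS2.integrable one_le_two
  -- moving integrals from ℝ to S
  have hsupp : ∀ φ : ℝ → ℂ, (∫ ξ : ℝ, F ξ * φ ξ) = ∫ ξ in WSKaux.S, F ξ * φ ξ := by
    intro φ
    have h1 : (∫ ξ in Set.Icc (-Real.pi) Real.pi, F ξ * φ ξ) = ∫ ξ : ℝ, F ξ * φ ξ :=
      setIntegral_eq_integral_of_forall_compl_eq_zero
        (fun x hx => by rw [hFsupp x hx, zero_mul])
    rw [← h1, integral_Icc_eq_integral_Ioc]
  have hsample : ∀ t : ℝ, (∫ ξ in WSKaux.S, F ξ * Complex.exp (Complex.I * t * ξ)) = (r:ℂ) * f t := by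
    intro t
    have h1 := hrep t
    rw [hsupp (fun ξ => Complex.exp (Complex.I * t * ξ))] at h1
    rw [h1]
    push_cast
    field_simp
  -- unnormalized Fourier coefficients of F
  set c : ℤ → ℂ := fun m => ∫ ξ in WSKaux.S, Complex.exp (-(Complex.I * m * ξ)) * F ξ with hcdef
  have hcoefval : ∀ m : ℤ, c m = (r:ℂ) * f ((-m : ℤ) : ℝ) := by
    intro m
    show (∫ ξ in WSKaux.S, Complex.exp (-(Complex.I * m * ξ)) * F ξ) = (r:ℂ) * f ((-m : ℤ) : ℝ)
    have : ∀ ξ ∈ WSKaux.S, Complex.exp (-(Complex.I * m * ξ)) * F ξ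
        = F ξ * Complex.exp (Complex.I * (((-m : ℤ) : ℝ)) * ξ) := by
      intro ξ _
      rw [mul_comm]
      congr 1
      push_cast
      ring_nf
    rw [setIntegral_congr_fun measurableSet_Ioc this, hsample]
  -- the error functions
  set E : ℕ → ℝ → ℂ := fun N ξ => F ξ -
      ((2 * Real.pi : ℝ) : ℂ)⁻¹ * ∑ m ∈ Finset.Icc (-(N:ℤ)) (N:ℤ), c m * Complex.exp (Complex.I * m * ξ)
    with hEdef
  set g : ℕ → ℝ → ℂ := fun N t =>
      ((r : ℂ))⁻¹ * ∫ ξ in WSKaux.S, E N ξ * Complex.exp (Complex.I * t * ξ) with hgdef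
  -- trig polynomial facts
  have htpc : ∀ N : ℕ, Continuous (fun ξ : ℝ =>
      ((2 * Real.pi : ℝ) : ℂ)⁻¹ * ∑ m ∈ Finset.Icc (-(N:ℤ)) (N:ℤ), c m * Complex.exp (Complex.I * m * ξ)) := by
    intro N
    refine continuous_const.mul (continuous_finset_sum _ fun m _ => continuous_const.mul ?_)
    exact Complex.continuous_exp.comp (by fun_prop)
  have habs1 : ∀ (a ξ : ℝ), ‖Complex.exp (Complex.I * a * ξ)‖ = 1 := by
    intro a ξ
    have h : Complex.I * a * ξ = ((a * ξ : ℝ) : ℂ) * Complex.I := by push_cast; ring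
    rw [h, Complex.norm_exp_ofReal_mul_I]
  have hEmem : ∀ N, MemLp (E N) 2 (volume.restrict WSKaux.S) := by
    intro N
    refine hFS2.sub ?_
    refine (memLp_top_of_bound (htpc N).aestronglyMeasurable
      (‖((2 * Real.pi : ℝ) : ℂ)⁻¹‖ * ∑ m ∈ Finset.Icc (-(N:ℤ)) (N:ℤ), ‖c m‖) ?_).mono_exponent le_top
    filter_upwards with ξ
    rw [norm_mul]
    refine mul_le_mul_of_nonneg_left ?_ (norm_nonneg _)
    refine (norm_sum_le _ _).trans (Finset.sum_le_sum fun m _ => ?_)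
    rw [norm_mul]
    have : ‖Complex.exp (Complex.I * (m:ℝ) * ξ)‖ = 1 := habs1 m ξ
    calc ‖c m‖ * ‖Complex.exp (Complex.I * (m:ℤ) * ξ)‖ ≤ ‖c m‖ * 1 := by
          refine mul_le_mul_of_nonneg_left (le_of_eq ?_) (norm_nonneg _)
          push_cast
          exact this
      _ = ‖c m‖ := mul_one _
  have hE1 : ∀ N, Integrable (E N) (volume.restrict WSKaux.S) :=
    fun N => (hEmem N).integrable one_le_two
  have hEexp1 : ∀ N (t : ℝ), Integrable (fun ξ => E N ξ * Complex.exp (Complex.I * t * ξ))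
      (volume.restrict WSKaux.S) := by
    intro N t
    have := (hE1 N).bdd_mul (f := fun ξ : ℝ => Complex.exp (Complex.I * t * ξ))
      (Complex.continuous_exp.comp (by fun_prop) : Continuous fun ξ : ℝ => Complex.exp (Complex.I * t * ξ)).aestronglyMeasurable
      (Filter.Eventually.of_forall fun ξ => le_of_eq (habs1 t ξ))
    refine this.congr (Filter.Eventually.of_forall fun ξ => mul_comm _ _)
  -- Claim B : the sampling residual equals g N
  have hrepr : ∀ (N : ℕ) (t : ℝ),
      f t - ∑ n ∈ Finset.Icc (-(N:ℤ)) (N:ℤ), f n * (nsinc (t - n) : ℝ) = g N t := by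
    intro N t
    have hexpc : Continuous (fun ξ : ℝ => Complex.exp (Complex.I * t * ξ)) :=
      Complex.continuous_exp.comp (by fun_prop)
    have hFint : Integrable (fun ξ => F ξ * Complex.exp (Complex.I * t * ξ))
        (volume.restrict WSKaux.S) := by
      have := hFS1.bdd_mul (f := fun ξ : ℝ => Complex.exp (Complex.I * t * ξ))
        hexpc.aestronglyMeasurable (Filter.Eventually.of_forall fun ξ => le_of_eq (habs1 t ξ))
      exact this.congr (Filter.Eventually.of_forall fun ξ => mul_comm _ _)
    have hint2 : ∀ k : ℤ, Integrable
        (fun ξ : ℝ => c k * Complex.exp (Complex.I * k * ξ) * Complex.exp (Complex.I * t * ξ))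
        (volume.restrict WSKaux.S) := by
      intro k
      have hc : Continuous (fun ξ : ℝ =>
          c k * Complex.exp (Complex.I * k * ξ) * Complex.exp (Complex.I * t * ξ)) := by
        refine ((continuous_const.mul (Complex.continuous_exp.comp (by fun_prop))).mul
          (Complex.continuous_exp.comp (by fun_prop)))
      exact hc.integrableOn_Ioc
    have hexpand : ∀ ξ : ℝ, E N ξ * Complex.exp (Complex.I * t * ξ)
        = F ξ * Complex.exp (Complex.I * t * ξ)
          - ((2 * Real.pi : ℝ) : ℂ)⁻¹ * ∑ m ∈ Finset.Icc (-(N:ℤ)) (N:ℤ),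
              c m * Complex.exp (Complex.I * m * ξ) * Complex.exp (Complex.I * t * ξ) := by
      intro ξ
      simp only [hEdef]
      rw [sub_mul, mul_assoc (((2 * Real.pi : ℝ) : ℂ))⁻¹, Finset.sum_mul]
    have hkernel : ∀ m : ℤ,
        (∫ ξ in WSKaux.S, Complex.exp (Complex.I * m * ξ) * Complex.exp (Complex.I * t * ξ))
          = ((2 * Real.pi * nsinc (t + m) : ℝ) : ℂ) := by
      intro m
      have harg : ∀ ξ : ℝ, Complex.exp (Complex.I * m * ξ) * Complex.exp (Complex.I * t * ξ)
          = Complex.exp (Complex.I * ((t + (m:ℝ)) : ℝ) * ξ) := by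
        intro ξ
        rw [← Complex.exp_add]
        congr 1
        push_cast
        ring
      simp_rw [harg]
      exact WSKaux.kernel_integral (t + m)
    have hI : (∫ ξ in WSKaux.S, E N ξ * Complex.exp (Complex.I * t * ξ))
        = (r:ℂ) * f t - ((2 * Real.pi : ℝ) : ℂ)⁻¹ * ∑ m ∈ Finset.Icc (-(N:ℤ)) (N:ℤ),
            c m * ((2 * Real.pi * nsinc (t + m) : ℝ) : ℂ) := by
      simp_rw [hexpand]
      rw [integral_sub hFint ((integrable_finset_sum _ fun m _ => hint2 m).const_mul _),
        hsample t, integral_const_mul, integral_finset_sum _ fun m _ => hint2 m]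
      congr 2
      refine Finset.sum_congr rfl fun m _ => ?_
      rw [show (fun ξ : ℝ => c m * Complex.exp (Complex.I * m * ξ) * Complex.exp (Complex.I * t * ξ))
          = fun ξ : ℝ => c m * (Complex.exp (Complex.I * m * ξ) * Complex.exp (Complex.I * t * ξ))
          from funext fun ξ => mul_assoc _ _ _]
      rw [integral_const_mul, hkernel m]
    have hterm : ∀ m ∈ Finset.Icc (-(N:ℤ)) (N:ℤ),
        c m * ((2 * Real.pi * nsinc (t + m) : ℝ) : ℂ)
          = ((2 * Real.pi : ℝ) : ℂ) * (r:ℂ) *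
            (f (((-m : ℤ) : ℝ)) * ((nsinc (t - ((-m : ℤ) : ℝ)) : ℝ) : ℂ)) := by
      intro m _
      rw [hcoefval m]
      have h2 : t - ((-m : ℤ) : ℝ) = t + (m:ℝ) := by push_cast; ring
      rw [h2]
      push_cast
      ring
    have hsum2 : ∑ m ∈ Finset.Icc (-(N:ℤ)) (N:ℤ),
        c m * ((2 * Real.pi * nsinc (t + m) : ℝ) : ℂ)
        = ((2 * Real.pi : ℝ) : ℂ) * (r:ℂ) *
          ∑ n ∈ Finset.Icc (-(N:ℤ)) (N:ℤ), f (n:ℝ) * ((nsinc (t - (n:ℝ)) : ℝ) : ℂ) := by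
      rw [Finset.sum_congr rfl hterm, ← Finset.mul_sum]
      congr 1
      exact WSKaux.sum_neg_reindex N (fun k => f (k:ℝ) * ((nsinc (t - (k:ℝ)) : ℝ) : ℂ))
    rw [hgdef]
    simp only []
    rw [hI, hsum2]
    have h2πC : ((2 * Real.pi : ℝ) : ℂ) ≠ 0 := by
      exact_mod_cast Complex.ofReal_ne_zero.mpr h2πpos.ne'
    have hπC : ((Real.pi : ℝ) : ℂ) ≠ 0 := by
      exact_mod_cast Complex.ofReal_ne_zero.mpr Real.pi_ne_zero
    field_simp
  -- pointwise Parseval for g N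
  have hgsum : ∀ (N : ℕ) (s : ℝ),
      HasSum (fun m : ℤ => ‖g N (s + m)‖ ^ 2) (∫ ξ in WSKaux.S, ‖E N ξ‖ ^ 2) := by
    intro N s
    set H : ℝ → ℂ := fun ξ => E N ξ * Complex.exp (Complex.I * s * ξ) with hHdef
    have hHnorm : ∀ ξ : ℝ, ‖H ξ‖ = ‖E N ξ‖ := fun ξ => by
      rw [hHdef]; rw [norm_mul, habs1 s ξ, mul_one]
    have hHmem : MemLp H 2 (volume.restrict WSKaux.S) := by
      refine ⟨(hEmem N).aestronglyMeasurable.mul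
        (Complex.continuous_exp.comp (by fun_prop) :
          Continuous fun ξ : ℝ => Complex.exp (Complex.I * s * ξ)).aestronglyMeasurable, ?_⟩
      have heq : eLpNorm H 2 (volume.restrict WSKaux.S)
          = eLpNorm (E N) 2 (volume.restrict WSKaux.S) :=
        eLpNorm_congr_norm_ae (Filter.Eventually.of_forall fun ξ => hHnorm ξ)
      rw [heq]
      exact (hEmem N).2
    have hps := WSKaux.parseval_Ioc hHmem
    have hval : (∫ ξ in WSKaux.S, ‖H ξ‖ ^ 2) = ∫ ξ in WSKaux.S, ‖E N ξ‖ ^ 2 := by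
      refine integral_congr_ae (Filter.Eventually.of_forall fun ξ => ?_)
      show ‖H ξ‖ ^ 2 = ‖E N ξ‖ ^ 2
      rw [hHnorm ξ]
    have hco : ∀ m : ℤ, (∫ ξ in WSKaux.S, Complex.exp (-(Complex.I * m * ξ)) * H ξ)
        = (r:ℂ) * g N (s - m) := by
      intro m
      have h1 : ∀ ξ ∈ WSKaux.S, Complex.exp (-(Complex.I * m * ξ)) * H ξ
          = E N ξ * Complex.exp (Complex.I * (s - (m:ℝ)) * ξ) := by
        intro ξ _
        rw [hHdef]
        rw [show Complex.exp (-(Complex.I * m * ξ)) * (E N ξ * Complex.exp (Complex.I * s * ξ))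
            = E N ξ * (Complex.exp (-(Complex.I * m * ξ)) * Complex.exp (Complex.I * s * ξ))
            from by ring, ← Complex.exp_add]
        congr 2
        push_cast
        ring
      rw [setIntegral_congr_fun measurableSet_Ioc h1, hgdef]
      simp only []
      rw [← mul_assoc, mul_inv_cancel₀ hrC, one_mul]
      congr 1
      push_cast
      ring
    have hfun : (fun m : ℤ => ‖∫ ξ in WSKaux.S, Complex.exp (-(Complex.I * m * ξ)) * H ξ‖ ^ 2)
        = fun m : ℤ => (2 * Real.pi) * ‖g N (s - m)‖ ^ 2 := by
      funext m
      rw [hco m, norm_mul, Complex.norm_real, Real.norm_eq_abs, _root_.abs_of_nonneg hrpos.le,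
        mul_pow, hrsq]
    rw [hfun, hval] at hps
    have hps2 := hps.mul_left ((2 * Real.pi)⁻¹)
    have hfun2 : (fun m : ℤ => (2 * Real.pi)⁻¹ * ((2 * Real.pi) * ‖g N (s - m)‖ ^ 2))
        = fun m : ℤ => ‖g N (s - m)‖ ^ 2 := by
      funext m
      rw [← mul_assoc, inv_mul_cancel₀ h2πpos.ne', one_mul]
    rw [hfun2, ← mul_assoc, inv_mul_cancel₀ h2πpos.ne', one_mul] at hps2
    have hps3 := (Equiv.neg ℤ).hasSum_iff.mpr hps2
    have hfun3 : ((fun m : ℤ => ‖g N (s - m)‖ ^ 2) ∘ (Equiv.neg ℤ))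
        = fun m : ℤ => ‖g N (s + m)‖ ^ 2 := by
      funext m
      simp only [Function.comp_apply, Equiv.neg_apply]
      rw [show s - ((-m : ℤ) : ℝ) = s + (m : ℝ) from by push_cast; ring]
    rwa [hfun3] at hps3
  have hgc : ∀ N, Continuous (g N) := by
    intro N
    refine continuous_const.mul ?_
    refine continuous_of_dominated (bound := fun ξ => ‖E N ξ‖) ?_ ?_ (hE1 N).norm ?_
    · intro t
      exact ((hEmem N).aestronglyMeasurable.mul
        (Complex.continuous_exp.comp (by fun_prop) : Continuous fun ξ : ℝ => Complex.exp (Complex.I * t * ξ)).aestronglyMeasurable)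
    · intro t
      filter_upwards with ξ
      rw [norm_mul, habs1 t ξ, mul_one]
    · filter_upwards with ξ
      exact continuous_const.mul (Complex.continuous_exp.comp (by fun_prop))
  set ε : ℕ → ℝ := fun N => ∫ ξ in WSKaux.S, ‖E N ξ‖ ^ 2 with hεdef
  have hεnn : ∀ N, 0 ≤ ε N := fun N => setIntegral_nonneg measurableSet_Ioc fun _ _ => sq_nonneg _
  have hL : ∀ N, (∫⁻ t, (‖g N t‖₊ : ℝ≥0∞) ^ 2) = ENNReal.ofReal (ε N) :=
    fun N => WSKaux.lintegral_sq_eq (g N) (hgc N) _ (hgsum N)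
  -- convergence of ε N to 0
  have hεtend : Tendsto ε atTop (nhds 0) := by
    have htotF : HasSum (fun m : ℤ => ‖c m‖ ^ 2)
        (2 * Real.pi * ∫ ξ in WSKaux.S, ‖F ξ‖ ^ 2) := WSKaux.parseval_Ioc hFS2
    set q : ℤ → ℝ := fun m => ‖c m‖ ^ 2 with hqdef
    set Q : ℝ := 2 * Real.pi * ∫ ξ in WSKaux.S, ‖F ξ‖ ^ 2 with hQdef
    have hsq : Summable q := htotF.summable
    have hdN : ∀ N : ℕ, HasSum
        (fun m : ℤ => ‖(if m ∈ Finset.Icc (-(N:ℤ)) (N:ℤ) then 0 else c m)‖ ^ 2)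
        (2 * Real.pi * ε N) := by
      intro N
      have hps := WSKaux.parseval_Ioc (hEmem N)
      have hd : ∀ m : ℤ, (∫ ξ in WSKaux.S, Complex.exp (-(Complex.I * m * ξ)) * E N ξ)
          = (if m ∈ Finset.Icc (-(N:ℤ)) (N:ℤ) then 0 else c m) := by
        intro m
        have hintF : Integrable (fun ξ : ℝ => Complex.exp (-(Complex.I * m * ξ)) * F ξ)
            (volume.restrict WSKaux.S) := by
          refine hFS1.bdd_mul (c := 1) ?_ (Filter.Eventually.of_forall fun ξ => ?_)
          · exact (Complex.continuous_exp.comp (by fun_prop)).aestronglyMeasurable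
          · have := habs1 (-(m:ℝ)) ξ
            rw [show Complex.I * (-(m:ℝ) : ℝ) * ξ = -(Complex.I * m * ξ) from by push_cast; ring] at this
            rw [this]
        have hintT : Integrable (fun ξ : ℝ => Complex.exp (-(Complex.I * m * ξ)) *
            (((2 * Real.pi : ℝ) : ℂ)⁻¹ * ∑ k ∈ Finset.Icc (-(N:ℤ)) (N:ℤ),
              c k * Complex.exp (Complex.I * k * ξ))) (volume.restrict WSKaux.S) := by
          have hcont : Continuous (fun ξ : ℝ => Complex.exp (-(Complex.I * m * ξ)) *
              (((2 * Real.pi : ℝ) : ℂ)⁻¹ * ∑ k ∈ Finset.Icc (-(N:ℤ)) (N:ℤ),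
                c k * Complex.exp (Complex.I * k * ξ))) := by
            refine Continuous.mul ?_ (htpc N)
            exact Complex.continuous_exp.comp (by fun_prop)
          exact hcont.integrableOn_Ioc
        have hexp : ∀ ξ : ℝ, Complex.exp (-(Complex.I * m * ξ)) * E N ξ
            = Complex.exp (-(Complex.I * m * ξ)) * F ξ
              - Complex.exp (-(Complex.I * m * ξ)) *
                (((2 * Real.pi : ℝ) : ℂ)⁻¹ * ∑ k ∈ Finset.Icc (-(N:ℤ)) (N:ℤ),
                  c k * Complex.exp (Complex.I * k * ξ)) := by
          intro ξ
          simp only [hEdef]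
          ring
        simp_rw [hexp]
        rw [integral_sub hintF hintT]
        have hsecond : (∫ ξ in WSKaux.S, Complex.exp (-(Complex.I * m * ξ)) *
            (((2 * Real.pi : ℝ) : ℂ)⁻¹ * ∑ k ∈ Finset.Icc (-(N:ℤ)) (N:ℤ),
              c k * Complex.exp (Complex.I * k * ξ)))
            = (if m ∈ Finset.Icc (-(N:ℤ)) (N:ℤ) then c m else 0) := by
          have hre : ∀ ξ : ℝ, Complex.exp (-(Complex.I * m * ξ)) *
              (((2 * Real.pi : ℝ) : ℂ)⁻¹ * ∑ k ∈ Finset.Icc (-(N:ℤ)) (N:ℤ),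
                c k * Complex.exp (Complex.I * k * ξ))
              = ((2 * Real.pi : ℝ) : ℂ)⁻¹ * ∑ k ∈ Finset.Icc (-(N:ℤ)) (N:ℤ),
                  c k * (Complex.exp (Complex.I * k * ξ) * Complex.exp (-(Complex.I * m * ξ))) := by
            intro ξ
            rw [mul_left_comm]
            congr 1
            rw [Finset.mul_sum]
            refine Finset.sum_congr rfl fun k _ => ?_
            ring
          simp_rw [hre]
          have hik : ∀ k : ℤ, Integrable (fun ξ : ℝ =>
              c k * (Complex.exp (Complex.I * k * ξ) * Complex.exp (-(Complex.I * m * ξ))))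
              (volume.restrict WSKaux.S) := by
            intro k
            refine Continuous.integrableOn_Ioc ?_
            exact continuous_const.mul ((Complex.continuous_exp.comp (by fun_prop)).mul
              (Complex.continuous_exp.comp (by fun_prop)))
          rw [integral_const_mul, integral_finset_sum _ fun k _ => hik k]
          have hk2 : ∀ k ∈ Finset.Icc (-(N:ℤ)) (N:ℤ),
              (∫ ξ in WSKaux.S, c k * (Complex.exp (Complex.I * k * ξ) * Complex.exp (-(Complex.I * m * ξ))))
              = if k = m then ((2 * Real.pi : ℝ) : ℂ) * c k else 0 := by
            intro k _
            rw [integral_const_mul]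
            have harg : ∀ ξ : ℝ, Complex.exp (Complex.I * k * ξ) * Complex.exp (-(Complex.I * m * ξ))
                = Complex.exp (Complex.I * (((k - m : ℤ) : ℝ)) * ξ) := by
              intro ξ
              rw [← Complex.exp_add]
              congr 1
              push_cast
              ring
            simp_rw [harg]
            rw [WSKaux.kernel_integral (((k - m : ℤ) : ℝ)), WSKaux.nsinc_int (k - m)]
            by_cases hkm : k = m
            · rw [if_pos hkm, if_pos (by omega)]
              push_cast
              ring
            · rw [if_neg (by omega), if_neg hkm]
              push_cast
              ring
          rw [Finset.sum_congr rfl hk2, Finset.sum_ite_eq' _ m (fun k => ((2 * Real.pi : ℝ) : ℂ) * c k)]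
          by_cases hm : m ∈ Finset.Icc (-(N:ℤ)) (N:ℤ)
          · rw [if_pos hm, if_pos hm, ← mul_assoc]
            rw [show (((2 * Real.pi : ℝ) : ℂ)⁻¹ * ((2 * Real.pi : ℝ) : ℂ)) = 1 from
              inv_mul_cancel₀ (by exact_mod_cast Complex.ofReal_ne_zero.mpr h2πpos.ne'), one_mul]
          · rw [if_neg hm, if_neg hm, mul_zero]
        rw [hsecond]
        by_cases hm : m ∈ Finset.Icc (-(N:ℤ)) (N:ℤ)
        · rw [if_pos hm, if_pos hm, sub_self]
        · rw [if_neg hm, if_neg hm, sub_zero]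
      have hfun : (fun m : ℤ => ‖∫ ξ in WSKaux.S, Complex.exp (-(Complex.I * m * ξ)) * E N ξ‖ ^ 2)
          = fun m : ℤ => ‖(if m ∈ Finset.Icc (-(N:ℤ)) (N:ℤ) then 0 else c m)‖ ^ 2 := by
        funext m
        rw [hd m]
      rwa [hfun] at hps
    have hmono : Monotone (fun N : ℕ => Finset.Icc (-(N:ℤ)) (N:ℤ)) := by
      intro a b hab x hx
      simp only [Finset.mem_Icc] at *
      omega
    have hcov : ∀ x : ℤ, ∃ N : ℕ, x ∈ Finset.Icc (-(N:ℤ)) (N:ℤ) := by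
      intro x
      exact ⟨x.natAbs, by simp only [Finset.mem_Icc]; omega⟩
    have hPtend : Tendsto (fun N : ℕ => ∑ m ∈ Finset.Icc (-(N:ℤ)) (N:ℤ), q m) atTop (nhds Q) :=
      htotF.comp (tendsto_atTop_finset_of_monotone hmono hcov)
    have hid : ∀ N : ℕ, 2 * Real.pi * ε N = Q - ∑ m ∈ Finset.Icc (-(N:ℤ)) (N:ℤ), q m := by
      intro N
      have h1 := (hdN N).tsum_eq
      have h2 : (fun m : ℤ => ‖(if m ∈ Finset.Icc (-(N:ℤ)) (N:ℤ) then 0 else c m)‖ ^ 2)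
          = fun m : ℤ => q m - (if m ∈ Finset.Icc (-(N:ℤ)) (N:ℤ) then q m else 0) := by
        funext m
        by_cases h : m ∈ Finset.Icc (-(N:ℤ)) (N:ℤ) <;> simp [h, hqdef]
      have hsind : Summable (fun m : ℤ => if m ∈ Finset.Icc (-(N:ℤ)) (N:ℤ) then q m else 0) :=
        summable_of_ne_finset_zero (s := Finset.Icc (-(N:ℤ)) (N:ℤ)) (fun m hm => if_neg hm)
      rw [h2, hsq.tsum_sub hsind,
        tsum_eq_sum (s := Finset.Icc (-(N:ℤ)) (N:ℤ)) (fun m hm => if_neg hm),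
        Finset.sum_congr rfl (fun m hm => if_pos hm), htotF.tsum_eq] at h1
      linarith [h1]
    have h3 : Tendsto (fun N : ℕ => 2 * Real.pi * ε N) atTop (nhds 0) := by
      simp_rw [hid]
      have := hPtend.const_sub Q
      simpa using this
    have h4 := h3.const_mul ((2 * Real.pi)⁻¹)
    simp only [mul_zero] at h4
    have h5 : (fun N : ℕ => (2 * Real.pi)⁻¹ * (2 * Real.pi * ε N)) = ε := by
      funext N
      rw [← mul_assoc, inv_mul_cancel₀ h2πpos.ne', one_mul]
    rwa [h5] at h4
  -- lintegral of ‖E N‖² over S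
  have hEL : ∀ N, (∫⁻ ξ in WSKaux.S, (‖E N ξ‖₊ : ℝ≥0∞) ^ 2) = ENNReal.ofReal (ε N) := by
    intro N
    have hi : Integrable (fun ξ => ‖E N ξ‖ ^ 2) (volume.restrict WSKaux.S) := by
      have := (hEmem N).integrable_norm_rpow (by norm_num) (by norm_num)
      refine this.congr (Filter.Eventually.of_forall fun ξ => ?_)
      norm_num [Real.rpow_natCast]
    rw [hεdef]
    rw [MeasureTheory.ofReal_integral_eq_lintegral_ofReal hi
      (Filter.Eventually.of_forall fun ξ => sq_nonneg _)]
    refine lintegral_congr fun ξ => ?_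
    rw [ENNReal.ofReal_pow (norm_nonneg _), ofReal_norm, enorm_eq_nnnorm]
  -- part 1 : L² convergence
  constructor
  · have hfun : ∀ N : ℕ, eLpNorm (fun t : ℝ =>
        f t - ∑ n ∈ Finset.Icc (-(N:ℤ)) (N:ℤ), f n * (nsinc (t - n) : ℝ)) 2 volume
        = ENNReal.ofReal (Real.sqrt (ε N)) := by
      intro N
      have h1 : (fun t : ℝ => f t - ∑ n ∈ Finset.Icc (-(N:ℤ)) (N:ℤ), f n * (nsinc (t - n) : ℝ))
          = g N := funext fun t => hrepr N t
      rw [h1, eLpNorm_eq_lintegral_rpow_enorm_toReal (by norm_num) (by norm_num)]; simp only [enorm_eq_nnnorm]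
      have h2 : ((2 : ℝ≥0∞).toReal) = ((2:ℕ) : ℝ) := by simp
      rw [h2]
      simp_rw [ENNReal.rpow_natCast]
      rw [hL N]
      rw [show ((1:ℝ) / ((2:ℕ):ℝ)) = (1/2 : ℝ) by norm_num,
        Real.sqrt_eq_rpow, ENNReal.ofReal_rpow_of_nonneg (hεnn N) (by norm_num : (0:ℝ) ≤ 1/2)]
    simp_rw [hfun]
    have : Tendsto (fun N => Real.sqrt (ε N)) atTop (nhds 0) := by
      have := (Real.continuous_sqrt.tendsto 0).comp hεtend
      simpa [Function.comp_def] using this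
    have h0 := (ENNReal.continuous_ofReal.tendsto 0).comp this
    simpa [Function.comp_def] using h0
  -- part 2 : uniform convergence
  · have hgb : ∀ (N : ℕ) (t : ℝ), ‖g N t‖ ≤ Real.sqrt (ε N) := by
      intro N t
      rw [hgdef]
      simp only []
      rw [norm_mul, norm_inv, Complex.norm_real, Real.norm_eq_abs, _root_.abs_of_nonneg hrpos.le]
      have h1 : ‖∫ ξ in WSKaux.S, E N ξ * Complex.exp (Complex.I * t * ξ)‖
          ≤ (∫⁻ ξ in WSKaux.S, (‖E N ξ‖₊ : ℝ≥0∞)).toReal := by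
        refine (norm_integral_le_lintegral_norm _).trans (le_of_eq ?_)
        congr 1
        refine lintegral_congr fun ξ => ?_
        rw [norm_mul, habs1 t ξ, mul_one, ofReal_norm, enorm_eq_nnnorm]
      have hCS : (∫⁻ ξ in WSKaux.S, (‖E N ξ‖₊ : ℝ≥0∞))
          ≤ (ENNReal.ofReal (ε N)) ^ (1/2 : ℝ) * (ENNReal.ofReal (2 * Real.pi)) ^ (1/2 : ℝ) := by
        have hconj : Real.HolderConjugate 2 2 := by
          rw [Real.holderConjugate_iff] <;> norm_num
        have hmeas : AEMeasurable (fun ξ : ℝ => (‖E N ξ‖₊ : ℝ≥0∞)) (volume.restrict WSKaux.S) :=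
          (hEmem N).aestronglyMeasurable.enorm
        have hmain := ENNReal.lintegral_mul_le_Lp_mul_Lq (volume.restrict WSKaux.S) hconj hmeas
          aemeasurable_const (g := fun _ : ℝ => (1 : ℝ≥0∞))
        simp only [Pi.mul_apply, mul_one, ENNReal.one_rpow] at hmain
        have e1 : (∫⁻ ξ in WSKaux.S, (‖E N ξ‖₊ : ℝ≥0∞) ^ (2:ℝ)) = ENNReal.ofReal (ε N) := by
          rw [← hEL N]
          refine lintegral_congr fun ξ => ?_
          rw [show ((2:ℝ)) = ((2:ℕ):ℝ) by norm_num, ENNReal.rpow_natCast]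
        have e2 : (∫⁻ _ in WSKaux.S, (1:ℝ≥0∞)) = ENNReal.ofReal (2 * Real.pi) := by
          rw [setLIntegral_const, one_mul, Real.volume_Ioc]
          rw [show Real.pi - -Real.pi = 2 * Real.pi by ring]
        rw [e1, e2] at hmain
        exact hmain
      have h2 : ((∫⁻ ξ in WSKaux.S, (‖E N ξ‖₊ : ℝ≥0∞))).toReal
          ≤ Real.sqrt (ε N) * Real.sqrt (2 * Real.pi) := by
        have hne : (ENNReal.ofReal (ε N)) ^ (1/2 : ℝ) * (ENNReal.ofReal (2 * Real.pi)) ^ (1/2 : ℝ) ≠ ⊤ := by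
          refine ENNReal.mul_ne_top ?_ ?_ <;>
            exact ENNReal.rpow_ne_top_of_nonneg (by norm_num) ENNReal.ofReal_ne_top
        refine (ENNReal.toReal_mono hne hCS).trans (le_of_eq ?_)
        rw [ENNReal.toReal_mul,
          ENNReal.ofReal_rpow_of_nonneg (hεnn N) (by norm_num : (0:ℝ) ≤ 1/2),
          ENNReal.ofReal_rpow_of_nonneg h2πpos.le (by norm_num : (0:ℝ) ≤ 1/2),
          ENNReal.toReal_ofReal (Real.rpow_nonneg (hεnn N) _),
          ENNReal.toReal_ofReal (Real.rpow_nonneg h2πpos.le _),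
          Real.sqrt_eq_rpow, Real.sqrt_eq_rpow]
      calc r⁻¹ * ‖∫ ξ in WSKaux.S, E N ξ * Complex.exp (Complex.I * t * ξ)‖
          ≤ r⁻¹ * (Real.sqrt (ε N) * Real.sqrt (2 * Real.pi)) := by
            refine mul_le_mul_of_nonneg_left (h1.trans h2) (by positivity)
        _ = Real.sqrt (ε N) := by
            rw [hr]
            field_simp
    have hbtend : Tendsto (fun N => Real.sqrt (ε N)) atTop (nhds 0) := by
      have := (Real.continuous_sqrt.tendsto 0).comp hεtend
      simpa [Function.comp_def] using this
    rw [Metric.tendstoUniformly_iff]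
    intro δ hδ
    filter_upwards [hbtend.eventually (gt_mem_nhds hδ)] with N hN t
    rw [dist_eq_norm]
    calc ‖f t - ∑ n ∈ Finset.Icc (-(N:ℤ)) (N:ℤ), f n * (nsinc (t - n) : ℝ)‖
        = ‖g N t‖ := by rw [hrepr N t]
      _ ≤ Real.sqrt (ε N) := hgb N t
      _ < δ := hN
end
end

section
/- Let g ∈ L²[0,Δ] and let ρ : ℤ → ℂ with |ρ(n)| = 1 for all n. Then the sequence {g(ξ)ρ(n)e^{−ibnξ} : n ∈ ℤ} is a Bessel sequence in L²[0,Δ] with bound B if and only if Δ|g(ξ)|² ≤ B a.e. on [0,Δ]. -/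
noncomputable section
open MeasureTheory Complex Filter Topology

open Set in
open scoped ENNReal Real in
private lemma integral_haar_eq {Δ : ℝ} [hΔ : Fact (0 < Δ)] {E : Type*} [NormedAddCommGroup E]
    [NormedSpace ℝ E] (f : AddCircle Δ → E) :
    ∫ z, f z ∂(@AddCircle.haarAddCircle Δ hΔ) = Δ⁻¹ • ∫ ξ in Set.Ioc (0:ℝ) Δ, f ξ := by
  have h1 := AddCircle.integral_preimage Δ 0 f
  rw [zero_add] at h1
  rw [h1, AddCircle.volume_eq_smul_haarAddCircle, integral_smul_measure,
    ENNReal.toReal_ofReal hΔ.out.le, ← smul_assoc, smul_eq_mul,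
    inv_mul_cancel₀ hΔ.out.ne', one_smul]

lemma memLp_liftIoc {Δ : ℝ} [hΔ : Fact (0 < Δ)] {h : ℝ → ℂ}
    (hSM : StronglyMeasurable h)
    (hh : MemLp h 2 (volume.restrict (Set.Ioc (0:ℝ) Δ))) :
    MemLp (AddCircle.liftIoc Δ 0 h) 2 (@AddCircle.haarAddCircle Δ hΔ) := by
  have hmeas : Measurable (AddCircle.liftIoc Δ 0 h) :=
    (hSM.measurable.comp measurable_subtype_coe).comp
      (AddCircle.measurableEquivIoc Δ 0).measurable
  have hvol : MemLp (AddCircle.liftIoc Δ 0 h) 2 (volume : Measure (AddCircle Δ)) := by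
    rw [← (AddCircle.measurePreserving_mk Δ 0).map_eq]
    rw [memLp_map_measure_iff hmeas.stronglyMeasurable.aestronglyMeasurable
      AddCircle.measurable_mk'.aemeasurable]
    rw [zero_add]
    refine hh.ae_eq ?_
    filter_upwards [ae_restrict_mem measurableSet_Ioc] with x hx
    simp only [Function.comp_apply]
    rw [AddCircle.liftIoc_coe_apply]
    rwa [zero_add]
  have := hvol.smul_measure (c := (ENNReal.ofReal Δ)⁻¹) (by simp [hΔ.out])
  rwa [AddCircle.volume_eq_smul_haarAddCircle, smul_smul,
    ENNReal.inv_mul_cancel (ENNReal.ofReal_pos.mpr hΔ.out).ne' ENNReal.ofReal_ne_top, one_smul] at this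


open Set in
open scoped ENNReal Real in
private lemma key0 {Δ : ℝ} (hΔ : 0 < Δ) (h : ℝ → ℂ)
    (hh : MemLp h 2 (volume.restrict (Set.Ioc (0:ℝ) Δ))) :
    HasSum (fun n : ℤ => ‖∫ ξ in Set.Ioc (0:ℝ) Δ, h ξ * (fourier n (ξ : AddCircle Δ))‖ ^ 2)
      (Δ * ∫ ξ in Set.Ioc (0:ℝ) Δ, ‖h ξ‖ ^ 2) := by
  haveI : Fact (0 < Δ) := ⟨hΔ⟩
  set μ := volume.restrict (Set.Ioc (0:ℝ) Δ) with hμ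
  set h' := hh.1.mk h with hh'def
  have heq : h =ᵐ[μ] h' := hh.1.ae_eq_mk
  have hSM : StronglyMeasurable h' := hh.1.stronglyMeasurable_mk
  have hh' : MemLp h' 2 μ := hh.ae_eq heq
  have hint : ∀ n : ℤ, (∫ ξ in Set.Ioc (0:ℝ) Δ, h ξ * (fourier n (ξ : AddCircle Δ)))
      = ∫ ξ in Set.Ioc (0:ℝ) Δ, h' ξ * (fourier n (ξ : AddCircle Δ)) := fun n =>
    integral_congr_ae (heq.mono fun ξ hξ => by dsimp only; rw [hξ])
  have hint2 : (∫ ξ in Set.Ioc (0:ℝ) Δ, ‖h ξ‖ ^ 2) = ∫ ξ in Set.Ioc (0:ℝ) Δ, ‖h' ξ‖ ^ 2 :=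
    integral_congr_ae (heq.mono fun ξ hξ => by dsimp only; rw [hξ])
  simp only [hμ, hint, hint2]
  -- now work with h'
  set fL := (memLp_liftIoc hSM hh').toLp (AddCircle.liftIoc Δ 0 h') with hfL
  have hfLae : (fL : AddCircle Δ → ℂ) =ᵐ[@AddCircle.haarAddCircle Δ ⟨hΔ⟩]
      AddCircle.liftIoc Δ 0 h' := (memLp_liftIoc hSM hh').coeFn_toLp
  have hlift : ∀ᵐ (ξ : ℝ) ∂μ, AddCircle.liftIoc Δ 0 h' (ξ : AddCircle Δ) = h' ξ := by
    filter_upwards [ae_restrict_mem measurableSet_Ioc] with ξ hξ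
    rw [AddCircle.liftIoc_coe_apply]; rwa [zero_add]
  have hcoeff : ∀ m : ℤ, fourierCoeff (fL : AddCircle Δ → ℂ) m
      = Δ⁻¹ • ∫ ξ in Set.Ioc (0:ℝ) Δ, fourier (-m) (ξ : AddCircle Δ) • h' ξ := by
    intro m
    rw [fourierCoeff]
    rw [integral_congr_ae (hfLae.mono fun z hz => by dsimp only; rw [hz] :
      (fun t => fourier (-m) t • (fL : AddCircle Δ → ℂ) t)
        =ᵐ[@AddCircle.haarAddCircle Δ ⟨hΔ⟩]
      (fun t => fourier (-m) t • AddCircle.liftIoc Δ 0 h' t))]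
    rw [integral_haar_eq (fun z => fourier (-m) z • AddCircle.liftIoc Δ 0 h' z)]
    congr 1
    exact integral_congr_ae (hlift.mono fun ξ hξ => by dsimp only; rw [hξ])
  have hpars := tsum_sq_fourierCoeff fL
  have hsummable : Summable fun m : ℤ => ‖fourierCoeff (fL : AddCircle Δ → ℂ) m‖ ^ 2 := by
    have hm := lp.memℓp ((@fourierBasis Δ ⟨hΔ⟩).repr fL)
    rw [memℓp_gen_iff (by norm_num : (0:ℝ) < (2 : ℝ≥0∞).toReal)] at hm
    refine hm.congr fun m => ?_
    rw [fourierBasis_repr]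
    norm_num
  have hRHS : (∫ z, ‖(fL : AddCircle Δ → ℂ) z‖ ^ 2 ∂(@AddCircle.haarAddCircle Δ ⟨hΔ⟩))
      = Δ⁻¹ * ∫ ξ in Set.Ioc (0:ℝ) Δ, ‖h' ξ‖ ^ 2 := by
    rw [integral_congr_ae (hfLae.mono fun z hz => by dsimp only; rw [hz] :
      (fun z => ‖(fL : AddCircle Δ → ℂ) z‖ ^ 2) =ᵐ[@AddCircle.haarAddCircle Δ ⟨hΔ⟩]
      (fun z => ‖AddCircle.liftIoc Δ 0 h' z‖ ^ 2))]
    rw [integral_haar_eq (fun z => ‖AddCircle.liftIoc Δ 0 h' z‖ ^ 2), smul_eq_mul]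
    congr 1
    exact integral_congr_ae (hlift.mono fun ξ hξ => by dsimp only; rw [hξ])
  have hbase : HasSum (fun m : ℤ => ‖fourierCoeff (fL : AddCircle Δ → ℂ) m‖ ^ 2)
      (Δ⁻¹ * ∫ ξ in Set.Ioc (0:ℝ) Δ, ‖h' ξ‖ ^ 2) := by
    rw [← hRHS]
    exact hsummable.hasSum_iff.mpr hpars
  have hmul := hbase.mul_left (Δ ^ 2)
  have hneg := ((Equiv.neg ℤ).hasSum_iff).mpr hmul
  have hval : Δ ^ 2 * (Δ⁻¹ * ∫ ξ in Set.Ioc (0:ℝ) Δ, ‖h' ξ‖ ^ 2)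
      = Δ * ∫ ξ in Set.Ioc (0:ℝ) Δ, ‖h' ξ‖ ^ 2 := by
    field_simp
  rw [hval] at hneg
  have hkey : ∀ n : ℤ, ‖∫ ξ in Set.Ioc (0:ℝ) Δ, h' ξ * (fourier n (ξ : AddCircle Δ))‖ ^ 2
      = Δ ^ 2 * ‖fourierCoeff (fL : AddCircle Δ → ℂ) (-n)‖ ^ 2 := by
    intro n
    rw [hcoeff (-n)]
    simp only [neg_neg]
    rw [show (∫ ξ in Set.Ioc (0:ℝ) Δ, fourier n (ξ : AddCircle Δ) • h' ξ)
        = ∫ ξ in Set.Ioc (0:ℝ) Δ, h' ξ * fourier n (ξ : AddCircle Δ) from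
      integral_congr_ae (ae_of_all _ fun ξ => by dsimp only; rw [smul_eq_mul, mul_comm])]
    rw [norm_smul, Real.norm_eq_abs, abs_of_pos (inv_pos.mpr hΔ), mul_pow]
    field_simp
  simp only [hkey]
  exact hneg


open Set in
open scoped ENNReal Real in
private lemma keyP {b Δ : ℝ} (hb : b ≠ 0) (hΔ : Δ = 2 * Real.pi / |b|) (h : ℝ → ℂ)
    (hh : MemLp h 2 (volume.restrict (Set.Ioc (0:ℝ) Δ))) :
    HasSum (fun n : ℤ =>
        ‖∫ ξ in Set.Ioc (0:ℝ) Δ, h ξ * Complex.exp (Complex.I * b * n * ξ)‖ ^ 2)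
      (Δ * ∫ ξ in Set.Ioc (0:ℝ) Δ, ‖h ξ‖ ^ 2) := by
  have hΔpos : 0 < Δ := hΔ ▸ div_pos Real.two_pi_pos (abs_pos.mpr hb)
  haveI : Fact (0 < Δ) := ⟨hΔpos⟩
  have hΔ0 : (Δ : ℂ) ≠ 0 := by exact_mod_cast hΔpos.ne'
  have habs : |b| * Δ = 2 * Real.pi := by
    rw [hΔ]; field_simp
  have hs := key0 hΔpos h hh
  rcases lt_or_gt_of_ne hb with hneg | hpos
  · -- b < 0 : exp (I b n ξ) = fourier (-n) ξ
    have habs' : ((-b : ℝ) : ℂ) * Δ = 2 * Real.pi := by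
      rw [abs_of_neg hneg] at habs; exact_mod_cast habs
    have hfn : ∀ (n : ℤ) (ξ : ℝ),
        Complex.exp (Complex.I * b * n * ξ) = fourier (-n) (ξ : AddCircle Δ) := by
      intro n ξ
      rw [fourier_coe_apply]
      congr 1
      rw [eq_div_iff hΔ0]
      push_cast
      push_cast at habs'
      linear_combination (-(Complex.I * (n:ℂ) * (ξ:ℂ))) * habs'
    have hneg' := ((Equiv.neg ℤ).hasSum_iff).mpr hs
    have : ∀ n : ℤ,
        ‖∫ ξ in Set.Ioc (0:ℝ) Δ, h ξ * Complex.exp (Complex.I * b * n * ξ)‖ ^ 2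
        = ‖∫ ξ in Set.Ioc (0:ℝ) Δ, h ξ * (fourier (-n) (ξ : AddCircle Δ))‖ ^ 2 := by
      intro n
      congr 2
      exact integral_congr_ae (ae_of_all _ fun ξ => by dsimp only; rw [hfn n ξ])
    simpa only [this, Function.comp_def, Equiv.neg_apply] using hneg'
  · have habs' : ((b : ℝ) : ℂ) * Δ = 2 * Real.pi := by
      rw [abs_of_pos hpos] at habs; exact_mod_cast habs
    have hfn : ∀ (n : ℤ) (ξ : ℝ),
        Complex.exp (Complex.I * b * n * ξ) = fourier n (ξ : AddCircle Δ) := by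
      intro n ξ
      rw [fourier_coe_apply]
      congr 1
      rw [eq_div_iff hΔ0]
      push_cast
      push_cast at habs'
      linear_combination (Complex.I * (n:ℂ) * (ξ:ℂ)) * habs'
    have : ∀ n : ℤ,
        ‖∫ ξ in Set.Ioc (0:ℝ) Δ, h ξ * Complex.exp (Complex.I * b * n * ξ)‖ ^ 2
        = ‖∫ ξ in Set.Ioc (0:ℝ) Δ, h ξ * (fourier n (ξ : AddCircle Δ))‖ ^ 2 := by
      intro n
      congr 2
      exact integral_congr_ae (ae_of_all _ fun ξ => by dsimp only; rw [hfn n ξ])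
    simpa only [this] using hs


open Set in
open scoped ENNReal Real in
private lemma sum_eqP {b Δ : ℝ} (hb : b ≠ 0) (hΔ : Δ = 2 * Real.pi / |b|)
    (g : ℝ → ℂ) (ρ : ℤ → ℂ) (hρ : ∀ n : ℤ, ‖ρ n‖ = 1) (F : ℝ → ℂ)
    (hFg : MemLp (fun ξ => F ξ * (starRingEnd ℂ) (g ξ)) 2
      (volume.restrict (Set.Ioc (0:ℝ) Δ))) :
    ∑' n : ℤ, ENNReal.ofReal
        (‖∫ ξ in Set.Ioc (0 : ℝ) Δ,
            F ξ * (starRingEnd ℂ) (g ξ * ρ n * Complex.exp (-Complex.I * b * n * ξ))‖ ^ 2)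
      = ENNReal.ofReal
        (Δ * ∫ ξ in Set.Ioc (0:ℝ) Δ, ‖F ξ * (starRingEnd ℂ) (g ξ)‖ ^ 2) := by
  have hnorm : ∀ n : ℤ,
      ‖∫ ξ in Set.Ioc (0 : ℝ) Δ,
          F ξ * (starRingEnd ℂ) (g ξ * ρ n * Complex.exp (-Complex.I * b * n * ξ))‖
      = ‖∫ ξ in Set.Ioc (0:ℝ) Δ,
          (F ξ * (starRingEnd ℂ) (g ξ)) * Complex.exp (Complex.I * b * n * ξ)‖ := by
    intro n
    have hptw : ∀ ξ : ℝ,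
        F ξ * (starRingEnd ℂ) (g ξ * ρ n * Complex.exp (-Complex.I * b * n * ξ))
        = (starRingEnd ℂ) (ρ n) *
          ((F ξ * (starRingEnd ℂ) (g ξ)) * Complex.exp (Complex.I * b * n * ξ)) := by
      intro ξ
      rw [map_mul, map_mul, ← Complex.exp_conj]
      rw [show (starRingEnd ℂ) (-Complex.I * b * n * ξ) = Complex.I * b * n * ξ by simp]
      ring
    simp only [hptw]
    rw [integral_const_mul, norm_mul, RCLike.norm_conj, hρ n, one_mul]
  have hs := keyP hb hΔ _ hFg
  simp only [hnorm]
  rw [← ENNReal.ofReal_tsum_of_nonneg (fun n => sq_nonneg _) hs.summable, hs.tsum_eq]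


/-- Bessel characterization for the modulated family
{g(ξ)ρ(n)e^{−ibnξ}} in L²[0,Δ], Δ = 2π/|b|. -/
theorem bessel_iff_ae_bound
    (b : ℝ) (hb : b ≠ 0) (Δ : ℝ) (hΔ : Δ = 2 * Real.pi / |b|)
    (g : ℝ → ℂ) (hg : MemLp g 2 (volume.restrict (Set.Ioc (0 : ℝ) Δ)))
    (ρ : ℤ → ℂ) (hρ : ∀ n : ℤ, ‖ρ n‖ = 1) (B : ℝ) (hB : 0 < B) :
    ((∀ F : ℝ → ℂ, MemLp F 2 (volume.restrict (Set.Ioc (0 : ℝ) Δ)) →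
        ∑' n : ℤ, ENNReal.ofReal
            (‖∫ ξ in Set.Ioc (0 : ℝ) Δ,
                F ξ * (starRingEnd ℂ) (g ξ * ρ n * Complex.exp (-Complex.I * b * n * ξ))‖ ^ 2)
          ≤ ENNReal.ofReal (B * ∫ ξ in Set.Ioc (0 : ℝ) Δ, ‖F ξ‖ ^ 2))
      ↔ (∀ᵐ ξ ∂(volume.restrict (Set.Ioc (0 : ℝ) Δ)), Δ * ‖g ξ‖ ^ 2 ≤ B)) := by

  have hΔpos : 0 < Δ := hΔ ▸ div_pos Real.two_pi_pos (abs_pos.mpr hb)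
  have hconj : MemLp (fun ξ => (starRingEnd ℂ) (g ξ)) 2
      (volume.restrict (Set.Ioc (0 : ℝ) Δ)) :=
    hg.of_le ((RCLike.continuous_conj (K := ℂ)).comp_aestronglyMeasurable hg.1)
      (ae_of_all _ fun ξ => by simp)
  constructor
  · intro H
    have hGeq : g =ᵐ[volume.restrict (Set.Ioc (0 : ℝ) Δ)] hg.1.mk g := hg.1.ae_eq_mk
    set G := hg.1.mk g with hGdef
    have hGSM : StronglyMeasurable G := hg.1.stronglyMeasurable_mk
    have hsuff : (∀ᵐ ξ ∂(volume.restrict (Set.Ioc (0 : ℝ) Δ)), Δ * ‖G ξ‖ ^ 2 ≤ B) →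
        ∀ᵐ ξ ∂(volume.restrict (Set.Ioc (0 : ℝ) Δ)), Δ * ‖g ξ‖ ^ 2 ≤ B := by
      intro h'
      filter_upwards [h', hGeq] with ξ h1 h2
      rw [h2]; exact h1
    apply hsuff
    set E : ℕ → Set ℝ :=
      fun k => Set.Ioc (0:ℝ) Δ ∩ {ξ | B + 1/((k:ℝ)+1) ≤ Δ * ‖G ξ‖ ^ 2} with hEdef
    have hEmeas : ∀ k, MeasurableSet (E k) := fun k =>
      measurableSet_Ioc.inter (measurableSet_le measurable_const
        (measurable_const.mul ((hGSM.measurable.norm).pow_const 2)))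
    have hEsub : ∀ k, E k ⊆ Set.Ioc (0:ℝ) Δ := fun k => Set.inter_subset_left
    have hEfin : ∀ k, volume (E k) ≠ ⊤ := fun k =>
      ((measure_mono (hEsub k)).trans_lt (by simp [Real.volume_Ioc])).ne
    have hE0 : ∀ k, volume (E k) = 0 := by
      intro k
      set F : ℝ → ℂ := (E k).indicator (fun _ => (1:ℂ)) with hFdef
      have hμEk : (volume.restrict (Set.Ioc (0 : ℝ) Δ)) (E k) = volume (E k) := by
        rw [Measure.restrict_apply (hEmeas k),
          Set.inter_eq_self_of_subset_left (hEsub k)]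
      have hF : MemLp F 2 (volume.restrict (Set.Ioc (0 : ℝ) Δ)) :=
        memLp_indicator_const 2 (hEmeas k) 1 (Or.inr (by rw [hμEk]; exact hEfin k))
      have hFgfun : (fun ξ => F ξ * (starRingEnd ℂ) (g ξ))
          = (E k).indicator (fun ξ => (starRingEnd ℂ) (g ξ)) := by
        funext ξ
        by_cases hx : ξ ∈ E k <;>
          simp [hFdef, Set.indicator_of_mem, Set.indicator_of_notMem, hx]
      have hFg : MemLp (fun ξ => F ξ * (starRingEnd ℂ) (g ξ)) 2
          (volume.restrict (Set.Ioc (0 : ℝ) Δ)) := by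
        rw [hFgfun]; exact hconj.indicator (hEmeas k)
      have hineq := H F hF
      rw [sum_eqP hb hΔ g ρ hρ F hFg] at hineq
      have hIntF : (∫ ξ in Set.Ioc (0:ℝ) Δ, ‖F ξ‖ ^ 2) = (volume (E k)).toReal := by
        have hFnormsq : ∀ ξ, ‖F ξ‖^2 = (E k).indicator (fun _ => (1:ℝ)) ξ := by
          intro ξ; by_cases hx : ξ ∈ E k <;> simp [hFdef, hx]
        simp only [hFnormsq]
        rw [integral_indicator (hEmeas k),
          Measure.restrict_restrict (hEmeas k),
          Set.inter_eq_self_of_subset_left (hEsub k), integral_const]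
        simp [Measure.real]
      have hIntFg : (∫ ξ in Set.Ioc (0:ℝ) Δ, ‖F ξ * (starRingEnd ℂ) (g ξ)‖ ^ 2)
          = ∫ ξ, ‖g ξ‖^2 ∂(volume.restrict (E k)) := by
        have h1 : ∀ ξ, ‖F ξ * (starRingEnd ℂ) (g ξ)‖^2
            = (E k).indicator (fun ξ => ‖g ξ‖^2) ξ := by
          intro ξ; by_cases hx : ξ ∈ E k <;>
            simp [hFdef, hx, norm_mul, mul_pow]
        simp only [h1]
        rw [integral_indicator (hEmeas k),
          Measure.restrict_restrict (hEmeas k),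
          Set.inter_eq_self_of_subset_left (hEsub k)]
      have hgsq : Integrable (fun ξ => ‖g ξ‖^2) (volume.restrict (Set.Ioc (0 : ℝ) Δ)) :=
        (memLp_two_iff_integrable_sq_norm hg.1).1 hg
      have hgsqE : Integrable (fun ξ => ‖g ξ‖^2) (volume.restrict (E k)) :=
        hgsq.mono_measure (Measure.restrict_mono (hEsub k) le_rfl)
      have haeE : ∀ᵐ ξ ∂(volume.restrict (E k)), B + 1/((k:ℝ)+1) ≤ Δ * ‖g ξ‖^2 := by
        have h1 : ∀ᵐ ξ ∂(volume.restrict (E k)), g ξ = G ξ :=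
          ae_restrict_of_ae_restrict_of_subset (hEsub k) hGeq
        filter_upwards [h1, ae_restrict_mem (hEmeas k)] with ξ h2 h3
        rw [h2]; exact h3.2
      have hlow : (B + 1/((k:ℝ)+1)) * (volume (E k)).toReal
          ≤ Δ * ∫ ξ in Set.Ioc (0:ℝ) Δ, ‖F ξ * (starRingEnd ℂ) (g ξ)‖ ^ 2 := by
        rw [hIntFg]
        calc (B + 1/((k:ℝ)+1)) * (volume (E k)).toReal
            = ∫ _ξ, (B + 1/((k:ℝ)+1)) ∂(volume.restrict (E k)) := by
              rw [integral_const]; simp [mul_comm, Measure.real]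
          _ ≤ ∫ ξ, Δ * ‖g ξ‖^2 ∂(volume.restrict (E k)) := by
              refine integral_mono_ae ?_ (hgsqE.const_mul Δ) haeE
              exact integrableOn_const (hEfin k)
          _ = Δ * ∫ ξ, ‖g ξ‖^2 ∂(volume.restrict (E k)) := integral_const_mul Δ _
      have hreal : Δ * (∫ ξ in Set.Ioc (0:ℝ) Δ, ‖F ξ * (starRingEnd ℂ) (g ξ)‖ ^ 2)
          ≤ B * (volume (E k)).toReal := by
        rw [← hIntF]
        refine (ENNReal.ofReal_le_ofReal_iff ?_).1 hineq
        exact mul_nonneg hB.le (integral_nonneg fun ξ => sq_nonneg _)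
      have hkpos : (0:ℝ) < 1/((k:ℝ)+1) := by positivity
      have hm : (volume (E k)).toReal = 0 := by
        nlinarith [ENNReal.toReal_nonneg (a := volume (E k))]
      exact ((ENNReal.toReal_eq_zero_iff _).1 hm).resolve_right (hEfin k)
    have hUnion : volume (⋃ k, E k) = 0 := measure_iUnion_null hE0
    rw [ae_restrict_iff' measurableSet_Ioc, ae_iff]
    apply measure_mono_null _ hUnion
    intro ξ hξ
    simp only [Set.mem_setOf_eq] at hξ
    push_neg at hξ
    obtain ⟨hmem, hgt⟩ := hξ
    obtain ⟨k, hk⟩ := exists_nat_one_div_lt (sub_pos.2 hgt)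
    exact Set.mem_iUnion.2 ⟨k, hmem, by simp only [Set.mem_setOf_eq]; linarith⟩
  · intro hbd F hF
    have hgle : ∀ᵐ ξ ∂(volume.restrict (Set.Ioc (0 : ℝ) Δ)),
        ‖g ξ‖ ≤ Real.sqrt (B/Δ) := by
      filter_upwards [hbd] with ξ h1
      have h2 : ‖g ξ‖^2 ≤ B/Δ := (le_div_iff₀' hΔpos).2 h1
      calc ‖g ξ‖ = Real.sqrt (‖g ξ‖^2) := (Real.sqrt_sq (norm_nonneg _)).symm
        _ ≤ Real.sqrt (B/Δ) := Real.sqrt_le_sqrt h2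
    have hFg : MemLp (fun ξ => F ξ * (starRingEnd ℂ) (g ξ)) 2
        (volume.restrict (Set.Ioc (0 : ℝ) Δ)) := by
      refine MemLp.of_le_mul (c := Real.sqrt (B/Δ)) hF (hF.1.mul hconj.1) ?_
      filter_upwards [hgle] with ξ h1
      rw [norm_mul, RCLike.norm_conj]
      calc ‖F ξ‖ * ‖g ξ‖ ≤ ‖F ξ‖ * Real.sqrt (B/Δ) :=
            mul_le_mul_of_nonneg_left h1 (norm_nonneg _)
        _ = Real.sqrt (B/Δ) * ‖F ξ‖ := mul_comm _ _
    rw [sum_eqP hb hΔ g ρ hρ F hFg]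
    apply ENNReal.ofReal_le_ofReal
    have hInt1 : Integrable (fun ξ => ‖F ξ * (starRingEnd ℂ) (g ξ)‖^2)
        (volume.restrict (Set.Ioc (0 : ℝ) Δ)) :=
      (memLp_two_iff_integrable_sq_norm hFg.1).1 hFg
    have hInt2 : Integrable (fun ξ => ‖F ξ‖^2) (volume.restrict (Set.Ioc (0 : ℝ) Δ)) :=
      (memLp_two_iff_integrable_sq_norm hF.1).1 hF
    calc Δ * ∫ ξ in Set.Ioc (0:ℝ) Δ, ‖F ξ * (starRingEnd ℂ) (g ξ)‖ ^ 2
        = ∫ ξ in Set.Ioc (0:ℝ) Δ, Δ * ‖F ξ * (starRingEnd ℂ) (g ξ)‖ ^ 2 :=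
          (integral_const_mul Δ _).symm
      _ ≤ ∫ ξ in Set.Ioc (0:ℝ) Δ, B * ‖F ξ‖ ^ 2 := by
          refine integral_mono_ae (hInt1.const_mul Δ) (hInt2.const_mul B) ?_
          filter_upwards [hbd] with ξ h1
          rw [norm_mul, RCLike.norm_conj, mul_pow]
          nlinarith [sq_nonneg ‖F ξ‖, sq_nonneg ‖g ξ‖]
      _ = B * ∫ ξ in Set.Ioc (0:ℝ) Δ, ‖F ξ‖ ^ 2 := integral_const_mul B _
end
end

section
/- Suppose φ ∈ L²(ℝ) is well-defined everywhere, C_{φ,θ}(t) := Σ_n |(λ_θφ)(t−n)|² < ∞ for all t ∈ ℝ, and {η_θ(t)(λ_θφ)(t−n) : n ∈ ℤ} is a Riesz basis of V_θ(φ). Then V_θ(φ) is a reproducing kernel Hilbert space: the point evaluation f ↦ f(t) is a bounded linear functional on V_θ(φ) for every t ∈ ℝ, and every f = c ∗_θ φ ∈ V_θ(φ) is the pointwise limit of η_θ(t)Σ_{|n|≤N} λ_θ(n)c(n)(λ_θφ)(t−n), which also converges in L²(ℝ). -/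
noncomputable section
open MeasureTheory Complex Filter Topology

lemma norm_lamP (θ : ℝ) (x : ℝ) : ‖lamP θ x‖ = 1 := by
  have h : Complex.I * (aP θ : ℂ) * (x : ℂ) ^ 2 = ((aP θ * x ^ 2 : ℝ) : ℂ) * Complex.I := by
    push_cast; ring
  rw [lamP, h, Complex.norm_exp_ofReal_mul_I]

lemma tendsto_Icc_atTop : Tendsto (fun N : ℕ => Finset.Icc (-(N : ℤ)) (N : ℤ)) atTop atTop := by
  apply Filter.tendsto_atTop_finset_of_monotone
  · intro a b hab
    exact Finset.Icc_subset_Icc (by simp; omega) (by exact_mod_cast hab)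
  · intro x
    exact ⟨x.natAbs, by simp only [Finset.mem_Icc]; omega⟩

lemma hasSum_Icc {E : Type*} [NormedAddCommGroup E] [CompleteSpace E] {f : ℤ → E}
    (hf : Summable f) :
    Tendsto (fun N : ℕ => ∑ n ∈ Finset.Icc (-(N : ℤ)) (N : ℤ), f n) atTop (nhds (∑' n, f n)) :=
  hf.hasSum.comp tendsto_Icc_atTop

lemma tsum_cs {a b : ℤ → ℝ} (ha : ∀ n, 0 ≤ a n) (hb : ∀ n, 0 ≤ b n)
    (ha2 : Summable fun n => a n ^ 2) (hb2 : Summable fun n => b n ^ 2) :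
    Summable (fun n => a n * b n) ∧
      (∑' n, a n * b n) ^ 2 ≤ (∑' n, a n ^ 2) * ∑' n, b n ^ 2 := by
  have hsum : Summable fun n => a n * b n := by
    refine Summable.of_nonneg_of_le (fun n => mul_nonneg (ha n) (hb n)) (fun n => ?_)
      ((ha2.add hb2).div_const 2)
    have := two_mul_le_add_sq (a n) (b n)
    linarith
  refine ⟨hsum, ?_⟩
  have hX : 0 ≤ (∑' n, a n ^ 2) * ∑' n, b n ^ 2 :=
    mul_nonneg (tsum_nonneg fun n => sq_nonneg _) (tsum_nonneg fun n => sq_nonneg _)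
  have h1 : ∑' n, a n * b n ≤ Real.sqrt ((∑' n, a n ^ 2) * ∑' n, b n ^ 2) := by
    refine Summable.tsum_le_of_sum_le hsum fun s => ?_
    have h2 : (∑ n ∈ s, a n * b n) ^ 2 ≤ (∑' n, a n ^ 2) * ∑' n, b n ^ 2 := by
      refine le_trans (Finset.sum_mul_sq_le_sq_mul_sq s a b) ?_
      exact mul_le_mul (Summable.sum_le_tsum s (fun n _ => sq_nonneg _) ha2)
        (Summable.sum_le_tsum s (fun n _ => sq_nonneg _) hb2)
        (Finset.sum_nonneg fun n _ => sq_nonneg _) (tsum_nonneg fun n => sq_nonneg _)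
    have h3 : 0 ≤ ∑ n ∈ s, a n * b n := Finset.sum_nonneg fun n _ => mul_nonneg (ha n) (hb n)
    nlinarith [Real.sq_sqrt hX, Real.sqrt_nonneg ((∑' n, a n ^ 2) * ∑' n, b n ^ 2)]
  calc (∑' n, a n * b n) ^ 2 ≤ Real.sqrt ((∑' n, a n ^ 2) * ∑' n, b n ^ 2) ^ 2 :=
        pow_le_pow_left₀ (tsum_nonneg fun n => mul_nonneg (ha n) (hb n)) h1 2
    _ = _ := Real.sq_sqrt hX


/-- under finiteness of C_{φ,θ} and the Riesz-basis property of
the chirped shifts, V_θ(φ) is an RKHS: point evaluations of f = c ∗_θ φ are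
bounded by the ℓ²-norm of c, and c ∗_θ φ is both the pointwise and the L² limit
of its partial sums. -/
theorem Vtheta_rkhs
    (θ : ℝ) (hθ : Real.sin θ ≠ 0) (φ : ℝ → ℂ) (hφ : MemLp φ 2 volume)
    (hC : ∀ t : ℝ, Summable (fun n : ℤ => ‖lamP θ (t - n) * φ (t - n)‖ ^ 2))
    (A B : ℝ) (hA : 0 < A) (hAB : A ≤ B)
    (hRiesz : ∀ (s : Finset ℤ) (c : ℤ → ℂ),
      A * ∑ n ∈ s, ‖c n‖ ^ 2 ≤
        (∫ t : ℝ, ‖∑ n ∈ s, c n *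
            (cP θ * (starRingEnd ℂ) (lamP θ t) * (lamP θ (t - n) * φ (t - n)))‖ ^ 2) ∧
      (∫ t : ℝ, ‖∑ n ∈ s, c n *
            (cP θ * (starRingEnd ℂ) (lamP θ t) * (lamP θ (t - n) * φ (t - n)))‖ ^ 2) ≤
        B * ∑ n ∈ s, ‖c n‖ ^ 2) :
    (∀ t : ℝ, ∃ Ct : ℝ, 0 ≤ Ct ∧
      ∀ c : ℤ → ℂ, Summable (fun n : ℤ => ‖c n‖ ^ 2) →
        ‖cP θ * (starRingEnd ℂ) (lamP θ t) *
            ∑' n : ℤ, lamP θ n * c n * (lamP θ (t - n) * φ (t - n))‖ ^ 2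
          ≤ Ct * ∑' n : ℤ, ‖c n‖ ^ 2) ∧
    (∀ c : ℤ → ℂ, Summable (fun n : ℤ => ‖c n‖ ^ 2) →
      (∀ t : ℝ, Tendsto (fun N : ℕ =>
          cP θ * (starRingEnd ℂ) (lamP θ t) *
            ∑ n ∈ Finset.Icc (-(N : ℤ)) (N : ℤ),
              lamP θ n * c n * (lamP θ (t - n) * φ (t - n)))
        atTop (nhds (cP θ * (starRingEnd ℂ) (lamP θ t) *
            ∑' n : ℤ, lamP θ n * c n * (lamP θ (t - n) * φ (t - n))))) ∧
      Tendsto (fun N : ℕ =>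
          eLpNorm (fun t : ℝ =>
            cP θ * (starRingEnd ℂ) (lamP θ t) *
                (∑' n : ℤ, lamP θ n * c n * (lamP θ (t - n) * φ (t - n))) -
              cP θ * (starRingEnd ℂ) (lamP θ t) *
                ∑ n ∈ Finset.Icc (-(N : ℤ)) (N : ℤ),
                  lamP θ n * c n * (lamP θ (t - n) * φ (t - n))) 2 volume)
        atTop (nhds 0)) := by
  -- basic facts
  have hB0 : 0 ≤ B := le_trans hA.le hAB
  have hlamc : Continuous (lamP θ) := by
    unfold lamP; fun_prop
  set ψ : ℝ → ℂ := fun x => lamP θ x * φ x with hψdef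
  have hψnorm : ∀ x, ‖ψ x‖ = ‖φ x‖ := by
    intro x; simp only [hψdef]; rw [norm_mul, norm_lamP, one_mul]
  have hψ : MemLp ψ 2 volume := by
    refine hφ.of_le (hlamc.aestronglyMeasurable.mul hφ.1) ?_
    filter_upwards with x using le_of_eq (hψnorm x)
  -- summability of the series at each point
  have hterm_norm : ∀ (c : ℤ → ℂ) (t : ℝ) (n : ℤ),
      ‖lamP θ n * c n * ψ (t - n)‖ = ‖c n‖ * ‖ψ (t - n)‖ := by
    intro c t n
    rw [norm_mul, norm_mul, norm_lamP, one_mul]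
  have hsumm : ∀ (c : ℤ → ℂ), Summable (fun n : ℤ => ‖c n‖ ^ 2) → ∀ t : ℝ,
      Summable (fun n : ℤ => lamP θ n * c n * ψ (t - n)) := by
    intro c hc t
    refine Summable.of_norm ?_
    have := (tsum_cs (a := fun n => ‖c n‖) (b := fun n => ‖ψ (t - n)‖)
      (fun n => norm_nonneg _) (fun n => norm_nonneg _) hc (hC t)).1
    simpa [hterm_norm c t, norm_lamP] using this
  refine ⟨?_, ?_⟩
  · -- Part 1 : bounded point evaluation
    intro t
    refine ⟨‖cP θ‖ ^ 2 * ∑' n : ℤ, ‖ψ (t - n)‖ ^ 2,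
      mul_nonneg (sq_nonneg _) (tsum_nonneg fun n => sq_nonneg _), ?_⟩
    intro c hc
    have hcs := tsum_cs (a := fun n => ‖c n‖) (b := fun n => ‖ψ (t - n)‖)
      (fun n => norm_nonneg _) (fun n => norm_nonneg _) hc (hC t)
    have hS : ‖∑' n : ℤ, lamP θ n * c n * ψ (t - n)‖ ≤ ∑' n : ℤ, ‖c n‖ * ‖ψ (t - n)‖ := by
      refine le_trans (norm_tsum_le_tsum_norm ?_) (le_of_eq ?_)
      · simpa [hterm_norm c t, norm_lamP] using hcs.1
      · exact tsum_congr fun n => hterm_norm c t n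
    show ‖cP θ * (starRingEnd ℂ) (lamP θ t) * ∑' n : ℤ, lamP θ n * c n * ψ (t - n)‖ ^ 2
      ≤ (‖cP θ‖ ^ 2 * ∑' n : ℤ, ‖ψ (t - n)‖ ^ 2) * ∑' n : ℤ, ‖c n‖ ^ 2
    have hnorm : ‖cP θ * (starRingEnd ℂ) (lamP θ t) * ∑' n : ℤ, lamP θ n * c n * ψ (t - n)‖
        = ‖cP θ‖ * ‖∑' n : ℤ, lamP θ n * c n * ψ (t - n)‖ := by
      rw [norm_mul, norm_mul, RCLike.norm_conj, norm_lamP, mul_one]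
    rw [hnorm]
    have h0 : (0:ℝ) ≤ ‖∑' n : ℤ, lamP θ n * c n * ψ (t - n)‖ := norm_nonneg _
    have h1 : (0:ℝ) ≤ ∑' n : ℤ, ‖c n‖ * ‖ψ (t - n)‖ :=
      tsum_nonneg fun n => mul_nonneg (norm_nonneg _) (norm_nonneg _)
    have h2 : ‖∑' n : ℤ, lamP θ n * c n * ψ (t - n)‖ ^ 2
        ≤ (∑' n : ℤ, ‖c n‖ ^ 2) * ∑' n : ℤ, ‖ψ (t - n)‖ ^ 2 :=
      le_trans (pow_le_pow_left₀ h0 hS 2) hcs.2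
    calc (‖cP θ‖ * ‖∑' n : ℤ, lamP θ n * c n * ψ (t - n)‖) ^ 2
        = ‖cP θ‖ ^ 2 * ‖∑' n : ℤ, lamP θ n * c n * ψ (t - n)‖ ^ 2 := by ring
      _ ≤ ‖cP θ‖ ^ 2 * ((∑' n : ℤ, ‖c n‖ ^ 2) * ∑' n : ℤ, ‖ψ (t - n)‖ ^ 2) :=
          mul_le_mul_of_nonneg_left h2 (sq_nonneg _)
      _ = (‖cP θ‖ ^ 2 * ∑' n : ℤ, ‖ψ (t - n)‖ ^ 2) * ∑' n : ℤ, ‖c n‖ ^ 2 := by ring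
  · -- Part 2
    intro c hc
    have hpt : ∀ t : ℝ, Tendsto (fun N : ℕ => cP θ * (starRingEnd ℂ) (lamP θ t) *
        ∑ n ∈ Finset.Icc (-(N:ℤ)) (N:ℤ), lamP θ n * c n * ψ (t - n)) atTop
        (nhds (cP θ * (starRingEnd ℂ) (lamP θ t) * ∑' n : ℤ, lamP θ n * c n * ψ (t - n))) :=
      fun t => (hasSum_Icc (hsumm c hc t)).const_mul _
    refine ⟨hpt, ?_⟩
    -- L² part
    set e : ℤ → ℝ → ℂ := fun n t => cP θ * (starRingEnd ℂ) (lamP θ t) * ψ (t - n) with hedef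
    have hψn : ∀ n : ℤ, MemLp (fun t : ℝ => ψ (t - n)) 2 volume := fun n =>
      hψ.comp_measurePreserving (measurePreserving_sub_right volume (n : ℝ))
    have heM : ∀ n : ℤ, MemLp (e n) 2 volume := by
      intro n
      have hmeas : AEStronglyMeasurable (e n) volume := by
        exact ((continuous_const.mul (Complex.continuous_conj.comp hlamc)).aestronglyMeasurable).mul
          (hψn n).1
      refine ((hψn n).const_mul (cP θ)).of_le hmeas ?_
      filter_upwards with t
      have h : ‖e n t‖ = ‖cP θ‖ * ‖ψ (t - n)‖ := by
        simp only [hedef]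
        rw [norm_mul, norm_mul, RCLike.norm_conj, norm_lamP, mul_one]
      rw [h]
      exact le_of_eq (norm_mul (cP θ) (ψ (t - n))).symm
    set G : Finset ℤ → ℝ → ℂ := fun s t => ∑ n ∈ s, (lamP θ n * c n) * e n t with hGdef
    have hGM : ∀ s, MemLp (G s) 2 volume := by
      intro s
      simp only [hGdef]
      exact memLp_finsetSum s (fun n _ => (heM n).const_mul _)
    have hGR : ∀ s : Finset ℤ, (∫ t : ℝ, ‖G s t‖ ^ 2) ≤ B * ∑ n ∈ s, ‖c n‖ ^ 2 := by
      intro s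
      have h := (hRiesz s (fun n => lamP θ n * c n)).2
      have h2 : ∑ n ∈ s, ‖lamP θ n * c n‖ ^ 2 = ∑ n ∈ s, ‖c n‖ ^ 2 :=
        Finset.sum_congr rfl fun n _ => by rw [norm_mul, norm_lamP, one_mul]
      rw [h2] at h
      exact h
    have hGe : ∀ s : Finset ℤ,
        eLpNorm (G s) 2 volume ≤ ENNReal.ofReal (B * ∑ n ∈ s, ‖c n‖ ^ 2) ^ (1/2 : ℝ) := by
      intro s
      have hint : Integrable (fun t => ‖G s t‖ ^ 2) volume := by
        have h := (hGM s).integrable_norm_rpow (by norm_num) (by norm_num)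
        simpa using h
      have h1 : eLpNorm (G s) 2 volume
          = (∫⁻ t, ENNReal.ofReal (‖G s t‖ ^ 2)) ^ (1/2 : ℝ) := by
        rw [eLpNorm_eq_lintegral_rpow_enorm_toReal (by norm_num) (by norm_num)]
        rw [ENNReal.toReal_ofNat]
        congr 1
        · refine lintegral_congr fun t => ?_
          rw [ENNReal.ofReal_pow (norm_nonneg _), ← ofReal_norm,
            ← ENNReal.rpow_natCast]
          norm_num
      rw [h1, ← MeasureTheory.ofReal_integral_eq_lintegral_ofReal hint
        (Filter.Eventually.of_forall fun t => sq_nonneg _)]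
      exact ENNReal.rpow_le_rpow (ENNReal.ofReal_le_ofReal (hGR s)) (by norm_num)
    -- the ℓ² tail
    set r : ℕ → ℝ :=
      fun N => (∑' n : ℤ, ‖c n‖ ^ 2) - ∑ n ∈ Finset.Icc (-(N:ℤ)) (N:ℤ), ‖c n‖ ^ 2 with hrdef
    have htail : ∀ (N : ℕ) (s : Finset ℤ), Disjoint s (Finset.Icc (-(N:ℤ)) (N:ℤ)) →
        ∑ n ∈ s, ‖c n‖ ^ 2 ≤ r N := by
      intro N s hdisj
      have h := Summable.sum_le_tsum (s ∪ Finset.Icc (-(N:ℤ)) (N:ℤ)) (fun n _ => sq_nonneg _) hc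
      rw [Finset.sum_union hdisj] at h
      simp only [hrdef]; linarith
    have hr0 : Tendsto r atTop (nhds 0) := by
      have h1 := hasSum_Icc hc
      have h2 : Tendsto (fun _ : ℕ => ∑' n : ℤ, ‖c n‖ ^ 2) atTop
        (nhds (∑' n : ℤ, ‖c n‖ ^ 2)) := tendsto_const_nhds
      simpa [hrdef] using h2.sub h1
    -- main per-N bound
    have hmain : ∀ N : ℕ, eLpNorm (fun t : ℝ =>
        cP θ * (starRingEnd ℂ) (lamP θ t) * (∑' n : ℤ, lamP θ n * c n * ψ (t - n)) -
          cP θ * (starRingEnd ℂ) (lamP θ t) *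
            ∑ n ∈ Finset.Icc (-(N:ℤ)) (N:ℤ), lamP θ n * c n * ψ (t - n)) 2 volume
        ≤ ENNReal.ofReal (B * r N) ^ (1/2 : ℝ) := by
      intro N
      have hAESM : ∀ M : ℕ,
          AEStronglyMeasurable (G (Finset.Icc (-(M:ℤ)) (M:ℤ) \ Finset.Icc (-(N:ℤ)) (N:ℤ)))
            volume := fun M => (hGM _).1
      have hlim : ∀ᵐ t : ℝ,
          Tendsto (fun M : ℕ => G (Finset.Icc (-(M:ℤ)) (M:ℤ) \ Finset.Icc (-(N:ℤ)) (N:ℤ)) t)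
            atTop (nhds (cP θ * (starRingEnd ℂ) (lamP θ t) *
              (∑' n : ℤ, lamP θ n * c n * ψ (t - n)) -
              cP θ * (starRingEnd ℂ) (lamP θ t) *
                ∑ n ∈ Finset.Icc (-(N:ℤ)) (N:ℤ), lamP θ n * c n * ψ (t - n))) := by
        refine Filter.Eventually.of_forall fun t => ?_
        have hev : (fun M : ℕ => cP θ * (starRingEnd ℂ) (lamP θ t) *
              ∑ n ∈ Finset.Icc (-(M:ℤ)) (M:ℤ), lamP θ n * c n * ψ (t - n) -
              cP θ * (starRingEnd ℂ) (lamP θ t) *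
                ∑ n ∈ Finset.Icc (-(N:ℤ)) (N:ℤ), lamP θ n * c n * ψ (t - n)) =ᶠ[atTop]
            (fun M : ℕ => G (Finset.Icc (-(M:ℤ)) (M:ℤ) \ Finset.Icc (-(N:ℤ)) (N:ℤ)) t) := by
          filter_upwards [eventually_ge_atTop N] with M hM
          have hsub : Finset.Icc (-(N:ℤ)) (N:ℤ) ⊆ Finset.Icc (-(M:ℤ)) (M:ℤ) :=
            Finset.Icc_subset_Icc (by exact_mod_cast neg_le_neg (Int.ofNat_le.mpr hM))
              (by exact_mod_cast Int.ofNat_le.mpr hM)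
          simp only [hGdef]
          rw [Finset.sum_sdiff_eq_sub hsub]
          congr 1 <;> · rw [Finset.mul_sum]; exact Finset.sum_congr rfl fun n _ => by ring
        exact Tendsto.congr' hev (((hpt t).sub_const _))
      refine le_trans (MeasureTheory.Lp.eLpNorm_lim_le_liminf_eLpNorm hAESM _ hlim) ?_
      have hbd : ∀ M : ℕ,
          eLpNorm (G (Finset.Icc (-(M:ℤ)) (M:ℤ) \ Finset.Icc (-(N:ℤ)) (N:ℤ))) 2 volume
            ≤ ENNReal.ofReal (B * r N) ^ (1/2 : ℝ) := by
        intro M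
        refine le_trans (hGe _) ?_
        refine ENNReal.rpow_le_rpow (ENNReal.ofReal_le_ofReal ?_) (by norm_num)
        exact mul_le_mul_of_nonneg_left (htail N _ Finset.sdiff_disjoint) hB0
      calc Filter.liminf (fun M : ℕ => eLpNorm
            (G (Finset.Icc (-(M:ℤ)) (M:ℤ) \ Finset.Icc (-(N:ℤ)) (N:ℤ))) 2 volume) atTop
          ≤ Filter.liminf (fun _ : ℕ => ENNReal.ofReal (B * r N) ^ (1/2 : ℝ)) atTop :=
            Filter.liminf_le_liminf (Filter.Eventually.of_forall hbd)
        _ = ENNReal.ofReal (B * r N) ^ (1/2 : ℝ) := Filter.liminf_const _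
    -- conclude by squeezing
    have hblim : Tendsto (fun N : ℕ => ENNReal.ofReal (B * r N) ^ (1/2 : ℝ)) atTop (nhds 0) := by
      have h1 : Tendsto (fun N => B * r N) atTop (nhds 0) := by
        simpa using hr0.const_mul B
      have h2 : Tendsto (fun N : ℕ => ENNReal.ofReal (B * r N)) atTop (nhds 0) := by
        simpa [Function.comp_def] using (ENNReal.continuous_ofReal.tendsto 0).comp h1
      have h3 := h2.ennrpow_const (1/2 : ℝ)
      simpa [ENNReal.zero_rpow_of_pos] using h3
    exact tendsto_of_tendsto_of_tendsto_of_le_of_le tendsto_const_nhds hblim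
      (fun N => zero_le) hmain
end
end
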